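/- arXiv:1001.0514 — 4 statements merged into one kernel-verified Lean document; each statement's English description precedes it below -/
import Mathlib

section
/- Let u_1,…,u_d be a ℤ-basis of ℤ^d, let x_1 ∈ ℤ^d, let l ≥ 1 be an integer, let a_1,…,a_{d−1} ∈ ℤ with a_i ≥ −l for all i, and set x_2 = x_1 + l·u_d. Then the convex hull of the 2d points {x_1, x_1+u_1, …, x_1+u_{d−1}, x_2, x_2+u_1+a_1 u_d, …, x_2+u_{d−1}+a_{d−1} u_d} contains exactly d(l+1) + Σ_{i=1}^{d−1} a_i lattice points, i.e. points of ℤ^d. -/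
open Matrix Finset
/-- Interpret an integer vector as a real vector. -/
def ofInt {d : ℕ} (z : Fin d → ℤ) : Fin d → ℝ := fun i => (z i : ℝ)

lemma ofInt_injective {d : ℕ} : Function.Injective (ofInt (d := d)) := by
  intro x y h
  funext i
  have := congrFun h i
  simpa [ofInt] using this

lemma mem_segment_helper {E : Type*} [AddCommGroup E] [Module ℝ E]
    (v e : E) (t M : ℝ) (h0 : 0 ≤ t) (h1 : t ≤ M) :
    v + t • e ∈ segment ℝ v (v + M • e) := by
  rcases eq_or_lt_of_le (h0.trans h1) with hM | hM
  · have ht : t = 0 := le_antisymm (h1.trans hM.ge) h0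
    simp only [ht, zero_smul, add_zero]
    exact left_mem_segment ℝ _ _
  · have h01 : t / M ≤ 1 := (div_le_one hM).mpr h1
    refine ⟨1 - t / M, t / M, by linarith, by positivity, by ring, ?_⟩
    have hMne : M ≠ 0 := hM.ne'
    rw [smul_add, smul_smul, div_mul_cancel₀ _ hMne]
    module

section Core

/-- last basis vector, real -/
def eR (m : ℕ) : Fin (m + 1) → ℝ := Pi.single (Fin.last m) 1
/-- i-th basis vector, real -/
def bR (m : ℕ) (i : Fin m) : Fin (m + 1) → ℝ := Pi.single i.castSucc 1
/-- last basis vector, integer -/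
def eZ (m : ℕ) : Fin (m + 1) → ℤ := Pi.single (Fin.last m) 1
/-- i-th basis vector, integer -/
def bZ (m : ℕ) (i : Fin m) : Fin (m + 1) → ℤ := Pi.single i.castSucc 1

variable {m : ℕ}

lemma castSucc_ne_last (i : Fin m) : (i.castSucc : Fin (m + 1)) ≠ Fin.last m :=
  (Fin.castSucc_lt_last i).ne

lemma eR_castSucc (i : Fin m) : eR m i.castSucc = 0 := by
  simp [eR, Pi.single_apply, castSucc_ne_last i]
lemma eR_last : eR m (Fin.last m) = 1 := by simp [eR]
lemma bR_castSucc (i j : Fin m) : bR m i j.castSucc = if j = i then 1 else 0 := by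
  simp [bR, Pi.single_apply, Fin.castSucc_inj]
lemma bR_last (i : Fin m) : bR m i (Fin.last m) = 0 := by
  simp [bR, Pi.single_apply, (castSucc_ne_last i).symm]
lemma eZ_castSucc (i : Fin m) : eZ m i.castSucc = 0 := by
  simp [eZ, Pi.single_apply, castSucc_ne_last i]
lemma eZ_last : eZ m (Fin.last m) = 1 := by simp [eZ]
lemma bZ_castSucc (i j : Fin m) : bZ m i j.castSucc = if j = i then 1 else 0 := by
  simp [bZ, Pi.single_apply, Fin.castSucc_inj]
lemma bZ_last (i : Fin m) : bZ m i (Fin.last m) = 0 := by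
  simp [bZ, Pi.single_apply, (castSucc_ne_last i).symm]

lemma ofInt_eZ : ofInt (eZ m) = eR m := by
  funext j
  simp only [ofInt, eZ, eR, Pi.single_apply]
  split <;> simp
lemma ofInt_bZ (i : Fin m) : ofInt (bZ m i) = bR m i := by
  funext j
  simp only [ofInt, bZ, bR, Pi.single_apply]
  split <;> simp

variable (m) in
/-- real region -/
def Rset (l : ℤ) (a : Fin m → ℤ) : Set (Fin (m + 1) → ℝ) :=
  {y : Fin (m + 1) → ℝ | (∀ i : Fin m, 0 ≤ y i.castSucc) ∧
    (∑ i : Fin m, y i.castSucc) ≤ 1 ∧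
    0 ≤ y (Fin.last m) ∧
    y (Fin.last m) ≤ (l : ℝ) + ∑ i : Fin m, (a i : ℝ) * y i.castSucc}

variable (m) in
/-- real vertex set -/
def Wset (l : ℤ) (a : Fin m → ℤ) : Set (Fin (m + 1) → ℝ) :=
  ({0, (l : ℝ) • eR m} : Set (Fin (m + 1) → ℝ)) ∪
    (Set.range fun i : Fin m => bR m i) ∪
    (Set.range fun i : Fin m => bR m i + ((l : ℝ) + a i) • eR m)

variable (l : ℤ) (a : Fin m → ℤ)

lemma Rset_convex : Convex ℝ (Rset m l a) := by
  intro y hy z hz s t hs ht hst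
  obtain ⟨hy1, hy2, hy3, hy4⟩ := hy
  obtain ⟨hz1, hz2, hz3, hz4⟩ := hz
  have hcoord : ∀ j, (s • y + t • z) j = s * y j + t * z j := fun j => rfl
  refine ⟨?_, ?_, ?_, ?_⟩
  · intro i
    rw [hcoord]
    have := hy1 i; have := hz1 i
    nlinarith
  · simp only [hcoord]
    rw [Finset.sum_add_distrib, ← Finset.mul_sum, ← Finset.mul_sum]
    nlinarith
  · rw [hcoord]
    nlinarith
  · simp only [hcoord]
    have hsum : ∑ i : Fin m, (a i : ℝ) * (s * y i.castSucc + t * z i.castSucc)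
        = s * (∑ i : Fin m, (a i : ℝ) * y i.castSucc)
          + t * (∑ i : Fin m, (a i : ℝ) * z i.castSucc) := by
      rw [Finset.mul_sum, Finset.mul_sum, ← Finset.sum_add_distrib]
      exact Finset.sum_congr rfl fun i _ => by ring
    rw [hsum]
    have hle : s * ((l:ℝ) + ∑ i : Fin m, (a i : ℝ) * y i.castSucc)
        + t * ((l:ℝ) + ∑ i : Fin m, (a i : ℝ) * z i.castSucc)
        = (l:ℝ) + (s * (∑ i : Fin m, (a i : ℝ) * y i.castSucc)
          + t * (∑ i : Fin m, (a i : ℝ) * z i.castSucc)) := by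
      have : s * (l:ℝ) + t * l = l := by rw [← add_mul, hst, one_mul]
      nlinarith [this]
    nlinarith [mul_le_mul_of_nonneg_left hy4 hs, mul_le_mul_of_nonneg_left hz4 ht, hle]

lemma W_subset_R (hl : 1 ≤ l) (ha : ∀ i, -l ≤ a i) : Wset m l a ⊆ Rset m l a := by
  have hl' : (1 : ℝ) ≤ l := by exact_mod_cast hl
  have ha' : ∀ i, (-l : ℝ) ≤ a i := fun i => by exact_mod_cast ha i
  rintro y (((rfl | rfl) | ⟨i, rfl⟩) | ⟨i, rfl⟩) <;> (try dsimp only)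
  · exact ⟨fun i => le_refl 0, by simp, le_refl 0, by
      simp only [Pi.zero_apply, mul_zero, Finset.sum_const_zero, add_zero]; linarith⟩
  · refine ⟨fun i => by simp [eR_castSucc], by simp [eR_castSucc], ?_, ?_⟩
    · simp only [Pi.smul_apply, eR_last, smul_eq_mul, mul_one]
      linarith
    · simp only [Pi.smul_apply, eR_castSucc, eR_last, smul_eq_mul, mul_one, Pi.zero_apply,
        mul_zero, Finset.sum_const_zero, add_zero, le_refl]
  · refine ⟨fun j => by rw [bR_castSucc]; positivity, ?_, by rw [bR_last], ?_⟩
    · simp only [bR_castSucc]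
      rw [Finset.sum_ite_eq' univ i (fun _ => (1:ℝ))]
      simp
    · rw [bR_last]
      simp only [bR_castSucc, mul_ite, mul_one, mul_zero]
      rw [Finset.sum_ite_eq' univ i (fun j => (a j : ℝ))]
      simp only [mem_univ, if_true]
      have := ha' i
      linarith
  · have hla : (0:ℝ) ≤ (l:ℝ) + a i := by have := ha' i; linarith
    have hc : ∀ j : Fin m, (bR m i + ((l:ℝ) + a i) • eR m) j.castSucc
        = if j = i then 1 else 0 := by
      intro j
      simp [bR_castSucc, eR_castSucc]
    have hL : (bR m i + ((l:ℝ) + a i) • eR m) (Fin.last m) = (l:ℝ) + a i := by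
      simp [bR_last, eR_last]
    refine ⟨fun j => by rw [hc j]; positivity, ?_, by rw [hL]; exact hla, ?_⟩
    · simp only [hc]
      rw [Finset.sum_ite_eq' univ i (fun _ => (1:ℝ))]
      simp
    · rw [hL]
      simp only [hc, mul_ite, mul_one, mul_zero]
      rw [Finset.sum_ite_eq' univ i (fun j => (a j : ℝ))]
      simp

lemma R_subset_hull (hl : 1 ≤ l) (ha : ∀ i, -l ≤ a i) :
    Rset m l a ⊆ convexHull ℝ (Wset m l a) := by
  have hl' : (1 : ℝ) ≤ l := by exact_mod_cast hl
  have ha' : ∀ i, (-l : ℝ) ≤ (a i : ℝ) := fun i => by exact_mod_cast ha i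
  intro y hy
  obtain ⟨h1, h2, h3, h4⟩ := hy
  classical
  set s : ℝ := ∑ i : Fin m, y i.castSucc with hs
  set w : Option (Fin m) → ℝ := fun o => o.elim (1 - s) (fun i => y i.castSucc) with hw
  set Mo : Option (Fin m) → ℝ := fun o => o.elim (l:ℝ) (fun i => (l:ℝ) + a i) with hMo
  set base : Option (Fin m) → (Fin (m+1) → ℝ) :=
    fun o => o.elim 0 (fun i => bR m i) with hbase
  have hw0 : ∀ o, 0 ≤ w o := by
    rintro (_ | i)
    · simp only [hw, Option.elim]
      linarith
    · exact h1 i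
  have hwsum : (∑ o : Option (Fin m), w o) = 1 := by
    rw [Fintype.sum_option]
    simp only [hw, Option.elim]
    rw [← hs]
    ring
  have hM0 : ∀ o, 0 ≤ Mo o := by
    rintro (_ | i)
    · simp only [hMo, Option.elim]; linarith
    · simp only [hMo, Option.elim]; have := ha' i; linarith
  set D : ℝ := (l:ℝ) + ∑ i : Fin m, (a i : ℝ) * y i.castSucc with hD
  have hyD : y (Fin.last m) ≤ D := h4
  have hDsum : ∑ o : Option (Fin m), w o * Mo o = D := by
    rw [Fintype.sum_option]
    simp only [hw, hMo, Option.elim]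
    have e : ∑ i : Fin m, y i.castSucc * ((l:ℝ) + a i)
        = (∑ i : Fin m, y i.castSucc) * l + ∑ i : Fin m, (a i:ℝ) * y i.castSucc := by
      rw [Finset.sum_mul, ← Finset.sum_add_distrib]
      exact Finset.sum_congr rfl fun i _ => by ring
    rw [e, ← hs, hD]
    ring
  have hD0 : 0 ≤ D := by
    rw [← hDsum]
    exact Finset.sum_nonneg fun o _ => mul_nonneg (hw0 o) (hM0 o)
  set tt : Option (Fin m) → ℝ :=
    fun o => if D = 0 then 0 else y (Fin.last m) * Mo o / D with htt
  have ht0 : ∀ o, 0 ≤ tt o := by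
    intro o
    simp only [htt]
    split
    · exact le_refl 0
    · exact div_nonneg (mul_nonneg h3 (hM0 o)) hD0
  have htM : ∀ o, tt o ≤ Mo o := by
    intro o
    simp only [htt]
    split
    · exact hM0 o
    · rename_i hne
      have hDpos : 0 < D := lt_of_le_of_ne hD0 (Ne.symm hne)
      rw [div_le_iff₀ hDpos]
      nlinarith [hM0 o, hyD, h3]
  have htsum : ∑ o : Option (Fin m), w o * tt o = y (Fin.last m) := by
    simp only [htt]
    by_cases hDz : D = 0
    · have hy0 : y (Fin.last m) = 0 := le_antisymm (hDz ▸ hyD) h3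
      simp [hDz, hy0]
    · simp only [hDz, if_false]
      have e : ∀ o : Option (Fin m), w o * (y (Fin.last m) * Mo o / D)
          = (w o * Mo o) * (y (Fin.last m) / D) := fun o => by ring
      rw [Finset.sum_congr rfl fun o _ => e o, ← Finset.sum_mul, hDsum]
      field_simp
  have hq : ∀ o, base o + tt o • eR m ∈ convexHull ℝ (Wset m l a) := by
    intro o
    have hseg := mem_segment_helper (base o) (eR m) (tt o) (Mo o) (ht0 o) (htM o)
    refine segment_subset_convexHull ?_ ?_ hseg
    · rcases o with _ | i
      · exact Or.inl (Or.inl (Or.inl rfl))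
      · exact Or.inl (Or.inr ⟨i, rfl⟩)
    · rcases o with _ | i
      · have e : base none + Mo none • eR m = (l:ℝ) • eR m := by
          simp [hbase, hMo]
        rw [e]
        exact Or.inl (Or.inl (Or.inr rfl))
      · have e : base (some i) + Mo (some i) • eR m = bR m i + ((l:ℝ) + a i) • eR m := by
          simp [hbase, hMo]
        rw [e]
        exact Or.inr ⟨i, rfl⟩
  have hrep : ∑ o : Option (Fin m), w o • (base o + tt o • eR m) = y := by
    have e1 : ∑ o : Option (Fin m), w o • (base o + tt o • eR m)
        = (∑ o : Option (Fin m), w o • base o)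
          + (∑ o : Option (Fin m), w o * tt o) • eR m := by
      simp_rw [smul_add, smul_smul]
      rw [Finset.sum_add_distrib, Finset.sum_smul]
    rw [e1, htsum]
    have e2 : ∑ o : Option (Fin m), w o • base o
        = ∑ i : Fin m, y i.castSucc • bR m i := by
      rw [Fintype.sum_option]
      simp [hbase, hw]
    rw [e2]
    funext j
    induction j using Fin.lastCases with
    | last =>
      simp [Finset.sum_apply, bR_last, eR_last]
    | cast i =>
      simp [Finset.sum_apply, bR_castSucc, eR_castSucc, mul_ite, Finset.sum_ite_eq,
        Finset.sum_ite_eq']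
  rw [← hrep]
  exact (convex_convexHull ℝ (Wset m l a)).sum_mem (fun o _ => hw0 o) hwsum (fun o _ => hq o)

lemma ofInt_add {d : ℕ} (z w : Fin d → ℤ) : ofInt (z + w) = ofInt z + ofInt w := by
  funext j; simp [ofInt]

lemma ofInt_smul {d : ℕ} (c : ℤ) (z : Fin d → ℤ) : ofInt (c • z) = (c : ℝ) • ofInt z := by
  funext j; simp [ofInt]

lemma ofInt_zero {d : ℕ} : ofInt (0 : Fin d → ℤ) = 0 := by
  funext j; simp [ofInt]

lemma hull_eq (hl : 1 ≤ l) (ha : ∀ i, -l ≤ a i) :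
    convexHull ℝ (Wset m l a) = Rset m l a :=
  subset_antisymm (convexHull_min (W_subset_R l a hl ha) (Rset_convex l a))
    (R_subset_hull l a hl ha)

def MoZ : Option (Fin m) → ℤ := fun o => o.elim l (fun i => l + a i)

variable (m) in
def baseZ : Option (Fin m) → (Fin (m + 1) → ℤ) := fun o => o.elim 0 (fun i => bZ m i)

noncomputable def Fz : Finset (Fin (m + 1) → ℤ) :=
  univ.biUnion fun o : Option (Fin m) =>
    (Finset.Icc 0 (MoZ l a o)).image fun k => baseZ m o + k • eZ m

lemma pt_last (o : Option (Fin m)) (k : ℤ) :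
    (baseZ m o + k • eZ m) (Fin.last m) = k := by
  rcases o with _ | i <;> simp [baseZ, bZ_last, eZ_last]

lemma pt_cast (o : Option (Fin m)) (k : ℤ) (j : Fin m) :
    (baseZ m o + k • eZ m) j.castSucc = if o = some j then 1 else 0 := by
  rcases o with _ | i
  · simp [baseZ, eZ_castSucc]
  · simp only [baseZ, Option.elim, Pi.add_apply, Pi.smul_apply, bZ_castSucc, eZ_castSucc,
      Pi.zero_apply, smul_eq_mul, mul_zero, add_zero, Option.some.injEq]
    simp [eq_comm]

lemma Fz_card : (Fz l a).card = ∑ o : Option (Fin m), (MoZ l a o + 1).toNat := by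
  rw [Fz, Finset.card_biUnion]
  · refine Finset.sum_congr rfl fun o _ => ?_
    rw [Finset.card_image_of_injective]
    · rw [Int.card_Icc]
      congr 1
      omega
    · intro k₁ k₂ h
      have h2 := congrFun h (Fin.last m)
      dsimp only at h2
      rw [pt_last, pt_last] at h2
      exact h2
  · intro o₁ _ o₂ _ hne
    rw [Function.onFun, Finset.disjoint_left]
    rintro z hz1 hz2
    obtain ⟨k₁, _, rfl⟩ := Finset.mem_image.mp hz1
    obtain ⟨k₂, _, heq⟩ := Finset.mem_image.mp hz2
    apply hne
    have hco : ∀ j : Fin m, (if o₂ = some j then (1:ℤ) else 0)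
        = (if o₁ = some j then 1 else 0) := by
      intro j
      have h2 := congrFun heq j.castSucc
      rw [pt_cast, pt_cast] at h2
      exact h2
    cases o₁ with
    | none =>
      cases o₂ with
      | none => rfl
      | some i => have := hco i; simp at this
    | some i =>
      have hi := hco i
      cases o₂ with
      | none => simp at hi
      | some i' =>
        by_cases hii : i' = i
        · rw [hii]
        · simp [hii] at hi

lemma lattice_eq (hl : 1 ≤ l) (ha : ∀ i, -l ≤ a i) :
    Rset m l a ∩ {x : Fin (m + 1) → ℝ | ∃ z, x = ofInt z}
      = ofInt '' ((Fz l a : Finset (Fin (m + 1) → ℤ)) : Set (Fin (m + 1) → ℤ)) := by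
  ext x
  constructor
  · rintro ⟨hxR, z, rfl⟩
    have hz1 : ∀ i : Fin m, 0 ≤ z i.castSucc := fun i => by
      exact_mod_cast show (0:ℝ) ≤ (z i.castSucc : ℝ) from hxR.1 i
    have hz2 : (∑ i : Fin m, z i.castSucc) ≤ 1 := by
      have h := hxR.2.1
      have h2 : ((∑ i : Fin m, z i.castSucc : ℤ) : ℝ) ≤ 1 := by
        push_cast
        exact h
      exact_mod_cast h2
    have hz3 : 0 ≤ z (Fin.last m) := by
      exact_mod_cast show (0:ℝ) ≤ (z (Fin.last m) : ℝ) from hxR.2.2.1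
    have hz4 : z (Fin.last m) ≤ l + ∑ i : Fin m, a i * z i.castSucc := by
      have h := hxR.2.2.2
      have h2 : ((z (Fin.last m) : ℤ) : ℝ)
          ≤ ((l + ∑ i : Fin m, a i * z i.castSucc : ℤ) : ℝ) := by
        push_cast
        exact h
      exact_mod_cast h2
    by_cases hcase : ∀ i : Fin m, z i.castSucc = 0
    · refine ⟨z, ?_, rfl⟩
      apply Finset.mem_biUnion.mpr
      refine ⟨none, mem_univ _, Finset.mem_image.mpr ⟨z (Fin.last m), ?_, ?_⟩⟩
      · rw [Finset.mem_Icc]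
        refine ⟨hz3, ?_⟩
        have hsum : ∑ i : Fin m, a i * z i.castSucc = 0 :=
          Finset.sum_eq_zero fun i _ => by rw [hcase i, mul_zero]
        rw [hsum, add_zero] at hz4
        simpa [MoZ] using hz4
      · funext j
        induction j using Fin.lastCases with
        | last => simp [baseZ, eZ_last]
        | cast i => simp [baseZ, eZ_castSucc, hcase i]
    · push_neg at hcase
      obtain ⟨i₀, hi₀⟩ := hcase
      have h5 : 1 ≤ z i₀.castSucc := by have := hz1 i₀; omega
      have hone : z i₀.castSucc = 1 := by
        have hle : z i₀.castSucc ≤ ∑ i : Fin m, z i.castSucc :=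
          Finset.single_le_sum (fun i _ => hz1 i) (mem_univ i₀)
        omega
      have hzero : ∀ j : Fin m, j ≠ i₀ → z j.castSucc = 0 := by
        intro j hj
        have hpair : z i₀.castSucc + z j.castSucc ≤ ∑ i : Fin m, z i.castSucc := by
          have hp := Finset.sum_pair (f := fun i : Fin m => z i.castSucc)
            (show i₀ ≠ j from fun h => hj h.symm)
          rw [← hp]
          exact Finset.sum_le_sum_of_subset_of_nonneg (Finset.subset_univ _)
            (fun i _ _ => hz1 i)
        have := hz1 j
        omega
      refine ⟨z, ?_, rfl⟩
      apply Finset.mem_biUnion.mpr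
      refine ⟨some i₀, mem_univ _, Finset.mem_image.mpr ⟨z (Fin.last m), ?_, ?_⟩⟩
      · rw [Finset.mem_Icc]
        refine ⟨hz3, ?_⟩
        have hsum : ∑ i : Fin m, a i * z i.castSucc = a i₀ := by
          rw [Finset.sum_eq_single i₀]
          · rw [hone, mul_one]
          · intro b _ hb
            rw [hzero b hb, mul_zero]
          · intro h
            exact absurd (mem_univ i₀) h
        rw [hsum] at hz4
        simpa [MoZ] using hz4
      · funext j
        induction j using Fin.lastCases with
        | last => simp [baseZ, bZ_last, eZ_last]
        | cast i =>
          by_cases hii : i = i₀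
          · subst hii
            simp [baseZ, bZ_castSucc, eZ_castSucc, hone]
          · simp [baseZ, bZ_castSucc, eZ_castSucc, hii, hzero i hii]
  · rintro ⟨z, hz, rfl⟩
    refine ⟨?_, z, rfl⟩
    obtain ⟨o, _, hzo⟩ := Finset.mem_biUnion.mp hz
    obtain ⟨k, hk, rfl⟩ := Finset.mem_image.mp hzo
    rw [Finset.mem_Icc] at hk
    have hrc : ∀ j : Fin m, ofInt (baseZ m o + k • eZ m) j.castSucc
        = if o = some j then (1:ℝ) else 0 := by
      intro j
      show (((baseZ m o + k • eZ m) j.castSucc : ℤ) : ℝ) = _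
      rw [pt_cast]
      split <;> simp
    have hrl : ofInt (baseZ m o + k • eZ m) (Fin.last m) = (k : ℝ) := by
      show (((baseZ m o + k • eZ m) (Fin.last m) : ℤ) : ℝ) = _
      rw [pt_last]
    refine ⟨fun i => by rw [hrc i]; split <;> norm_num, ?_, ?_, ?_⟩
    · simp only [hrc]
      rcases o with _ | i
      · simp
      · simp only [Option.some.injEq]
        rw [Finset.sum_ite_eq univ i (fun _ => (1:ℝ))]
        simp
    · rw [hrl]
      exact_mod_cast hk.1
    · rw [hrl]
      simp only [hrc]
      rcases o with _ | i
      · simp only [reduceCtorEq, if_false, mul_zero, Finset.sum_const_zero, add_zero]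
        have : k ≤ l := by simpa [MoZ] using hk.2
        exact_mod_cast this
      · simp only [Option.some.injEq, mul_ite, mul_one, mul_zero]
        rw [Finset.sum_ite_eq univ i (fun j => (a j : ℝ))]
        simp only [mem_univ, if_true]
        have : k ≤ l + a i := by simpa [MoZ] using hk.2
        exact_mod_cast this

/-- The core count, in standard coordinates. -/
lemma core_count (m : ℕ) (l : ℤ) (hl : 1 ≤ l) (a : Fin m → ℤ) (ha : ∀ i, -l ≤ a i) :
    (((convexHull ℝ (ofInt ''
        (({0, l • eZ m} : Set (Fin (m + 1) → ℤ)) ∪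
          (Set.range fun i : Fin m => bZ m i) ∪
          (Set.range fun i : Fin m => bZ m i + (l + a i) • eZ m)))) ∩
      {x : Fin (m + 1) → ℝ | ∃ z, x = ofInt z}).ncard : ℤ)
      = (m + 1) * (l + 1) + ∑ i, a i := by
  have hW : ofInt ''
        (({0, l • eZ m} : Set (Fin (m + 1) → ℤ)) ∪
          (Set.range fun i : Fin m => bZ m i) ∪
          (Set.range fun i : Fin m => bZ m i + (l + a i) • eZ m))
      = Wset m l a := by
    rw [Set.image_union, Set.image_union, Set.image_insert_eq, Set.image_singleton,
      ← Set.range_comp, ← Set.range_comp]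
    unfold Wset
    congr 1
    · congr 1
      · rw [ofInt_zero]
        congr 1
        rw [ofInt_smul, ofInt_eZ]
      · have hf : (ofInt ∘ fun i : Fin m => bZ m i) = fun i => bR m i := by
          funext i
          exact ofInt_bZ i
        rw [hf]
    · have hf : (ofInt ∘ fun i : Fin m => bZ m i + (l + a i) • eZ m)
          = fun i => bR m i + ((l:ℝ) + a i) • eR m := by
        funext i
        show ofInt (bZ m i + (l + a i) • eZ m) = bR m i + ((l:ℝ) + a i) • eR m
        rw [ofInt_add, ofInt_smul, ofInt_eZ, ofInt_bZ]
        push_cast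
        rfl
      rw [hf]
  rw [hW, hull_eq l a hl ha, lattice_eq l a hl ha,
    Set.ncard_image_of_injective _ ofInt_injective, Set.ncard_coe_finset, Fz_card]
  have hnn : ∀ o : Option (Fin m), ((MoZ l a o + 1).toNat : ℤ) = MoZ l a o + 1 := by
    rintro (_ | i)
    · rw [Int.toNat_of_nonneg]
      simp only [MoZ, Option.elim]
      omega
    · rw [Int.toNat_of_nonneg]
      simp only [MoZ, Option.elim]
      have := ha i
      omega
  rw [Nat.cast_sum]
  simp_rw [hnn]
  rw [Fintype.sum_option]
  simp only [MoZ, Option.elim]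
  have hsum2 : ∑ i : Fin m, (l + a i + 1) = m * (l + 1) + ∑ i, a i := by
    rw [show (fun i : Fin m => l + a i + 1) = fun i => (l + 1) + a i from
      funext fun i => by ring, Finset.sum_add_distrib, Finset.sum_const, card_univ,
      Fintype.card_fin, nsmul_eq_mul]
  rw [hsum2]
  push_cast
  ring

end Core


lemma transport {d : ℕ} (U : Matrix (Fin d) (Fin d) ℤ) (hU : IsUnit U.det)
    (x₁ : Fin d → ℤ) (S : Set (Fin d → ℤ)) :
    ((convexHull ℝ (ofInt '' ((fun z => x₁ + z ᵥ* U) '' S))) ∩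
      {x : Fin d → ℝ | ∃ z, x = ofInt z}).ncard
      = ((convexHull ℝ (ofInt '' S)) ∩ {x : Fin d → ℝ | ∃ z, x = ofInt z}).ncard := by
  classical
  set UR : Matrix (Fin d) (Fin d) ℝ := U.map Int.cast with hUR
  let A : (Fin d → ℝ) →ᵃ[ℝ] (Fin d → ℝ) :=
    { toFun := fun y => ofInt x₁ + UR.vecMulLinear y
      linear := UR.vecMulLinear
      map_vadd' := by
        intro p v
        simp only [vadd_eq_add, map_add]
        abel }
  have key : ∀ z : Fin d → ℤ, ofInt (x₁ + z ᵥ* U) = A (ofInt z) := by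
    intro z
    funext j
    show ((x₁ j + (z ᵥ* U) j : ℤ) : ℝ) = ofInt x₁ j + (ofInt z ᵥ* UR) j
    simp only [ofInt, Matrix.vecMul, dotProduct, Matrix.map_apply, hUR]
    push_cast
    ring
  have hURdet : IsUnit UR.det := by
    have : ((U.det : ℤ) : ℝ) = UR.det := by
      rw [hUR]
      exact RingHom.map_det (Int.castRingHom ℝ) U
    rw [← this]
    exact hU.map (Int.castRingHom ℝ)
  haveI : Invertible UR := UR.invertibleOfIsUnitDet hURdet
  haveI : Invertible U := U.invertibleOfIsUnitDet hU
  have hinj : Function.Injective A := by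
    intro y₁ y₂ h
    have h2 : y₁ ᵥ* UR = y₂ ᵥ* UR := by
      have := add_left_cancel (a := ofInt x₁) h
      simpa [Matrix.vecMulLinear_apply] using this
    have : (y₁ ᵥ* UR) ᵥ* ⅟UR = (y₂ ᵥ* UR) ᵥ* ⅟UR := by rw [h2]
    simpa [Matrix.vecMul_vecMul, mul_invOf_self, Matrix.vecMul_one] using this
  have hlat : A '' {x : Fin d → ℝ | ∃ z, x = ofInt z} = {x : Fin d → ℝ | ∃ z, x = ofInt z} := by
    ext x
    constructor
    · rintro ⟨y, ⟨z, rfl⟩, rfl⟩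
      exact ⟨x₁ + z ᵥ* U, (key z).symm⟩
    · rintro ⟨z, rfl⟩
      refine ⟨ofInt ((z - x₁) ᵥ* ⅟U), ⟨_, rfl⟩, ?_⟩
      rw [← key]
      congr 1
      have hz : x₁ + (z - x₁) ᵥ* (⅟U * U) = z := by
        rw [invOf_mul_self, Matrix.vecMul_one]
        abel
      rw [Matrix.vecMul_vecMul, hz]
  have himg : ofInt '' ((fun z => x₁ + z ᵥ* U) '' S) = A '' (ofInt '' S) := by
    rw [← Set.image_comp, ← Set.image_comp]
    exact Set.image_congr' (fun z => key z)
  rw [himg, ← AffineMap.image_convexHull]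
  conv_lhs => rw [← hlat]
  rw [← Set.image_inter hinj, Set.ncard_image_of_injective _ hinj]

/-- The thickened edge contains exactly `d(l+1) + Σ a_i` lattice points. -/
theorem thickened_edge_lattice_points (d : ℕ) (hd : 1 ≤ d)
    (u : Fin d → (Fin d → ℤ))
    (hbasis : (Matrix.of fun i j => u i j).det = 1 ∨
      (Matrix.of fun i j => u i j).det = -1)
    (x₁ : Fin d → ℤ) (l : ℤ) (hl : 1 ≤ l)
    (a : Fin (d - 1) → ℤ) (ha : ∀ i, -l ≤ a i)
    (x₂ : Fin d → ℤ) (hx₂ : x₂ = x₁ + l • u ⟨d - 1, by omega⟩) :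
    (((convexHull ℝ (ofInt ''
        ({x₁, x₂} ∪
          (Set.range fun i : Fin (d - 1) => x₁ + u (Fin.castLE (Nat.sub_le d 1) i)) ∪
          (Set.range fun i : Fin (d - 1) =>
            x₂ + u (Fin.castLE (Nat.sub_le d 1) i) + a i • u ⟨d - 1, by omega⟩)))) ∩
      {x : Fin d → ℝ | ∃ z : Fin d → ℤ, x = ofInt z}).ncard : ℤ)
      = d * (l + 1) + ∑ i, a i := by
  obtain ⟨m, rfl⟩ : ∃ m, d = m + 1 := ⟨d - 1, by omega⟩
  show (((convexHull ℝ (ofInt ''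
        ({x₁, x₂} ∪
          (Set.range fun i : Fin m => x₁ + u i.castSucc) ∪
          (Set.range fun i : Fin m =>
            x₂ + u i.castSucc + a i • u (Fin.last m))))) ∩
      {x : Fin (m + 1) → ℝ | ∃ z : Fin (m + 1) → ℤ, x = ofInt z}).ncard : ℤ)
      = (m + 1 : ℕ) * (l + 1) + ∑ i : Fin m, a i
  set U : Matrix (Fin (m + 1)) (Fin (m + 1)) ℤ := Matrix.of fun i j => u i j with hUdef
  have hU : IsUnit U.det := by
    rcases hbasis with h | h <;> rw [show U.det = _ from rfl, h] <;>
      exact Int.isUnit_iff.mpr (by tauto)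
  have hsingle : ∀ (p : Fin (m + 1)) (c : ℤ), (Pi.single p c) ᵥ* U = c • u p := by
    intro p c
    rw [Matrix.single_vecMul]
    funext j
    simp [hUdef]
  have hx₂' : x₂ = x₁ + l • u (Fin.last m) := hx₂
  have hT0 : x₁ + (0 : Fin (m + 1) → ℤ) ᵥ* U = x₁ := by
    rw [Matrix.zero_vecMul, add_zero]
  have hTL : x₁ + (l • eZ m) ᵥ* U = x₂ := by
    rw [Matrix.smul_vecMul, show eZ m = Pi.single (Fin.last m) 1 from rfl, hsingle,
      one_smul, hx₂']
  have hTb : ∀ i : Fin m, x₁ + (bZ m i) ᵥ* U = x₁ + u i.castSucc := by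
    intro i
    rw [show bZ m i = Pi.single i.castSucc 1 from rfl, hsingle, one_smul]
  have hTc : ∀ i : Fin m, x₁ + (bZ m i + (l + a i) • eZ m) ᵥ* U
      = x₂ + u i.castSucc + a i • u (Fin.last m) := by
    intro i
    rw [Matrix.add_vecMul, Matrix.smul_vecMul,
      show bZ m i = Pi.single i.castSucc 1 from rfl,
      show eZ m = Pi.single (Fin.last m) 1 from rfl, hsingle, hsingle, one_smul, hx₂',
      add_smul]
    abel
  have hset : ({x₁, x₂} ∪
        (Set.range fun i : Fin m => x₁ + u i.castSucc) ∪
        (Set.range fun i : Fin m => x₂ + u i.castSucc + a i • u (Fin.last m)))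
      = (fun z => x₁ + z ᵥ* U) ''
        (({0, l • eZ m} : Set (Fin (m + 1) → ℤ)) ∪
          (Set.range fun i : Fin m => bZ m i) ∪
          (Set.range fun i : Fin m => bZ m i + (l + a i) • eZ m)) := by
    ext v
    constructor
    · rintro (((rfl | rfl) | ⟨i, rfl⟩) | ⟨i, rfl⟩)
      · exact ⟨0, Or.inl (Or.inl (Or.inl rfl)), hT0⟩
      · exact ⟨l • eZ m, Or.inl (Or.inl (Or.inr rfl)), hTL⟩
      · exact ⟨bZ m i, Or.inl (Or.inr ⟨i, rfl⟩), hTb i⟩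
      · exact ⟨bZ m i + (l + a i) • eZ m, Or.inr ⟨i, rfl⟩, hTc i⟩
    · rintro ⟨z, (((rfl | rfl) | ⟨i, rfl⟩) | ⟨i, rfl⟩), rfl⟩
      · exact Or.inl (Or.inl (Or.inl hT0))
      · exact Or.inl (Or.inl (Or.inr hTL))
      · exact Or.inl (Or.inr ⟨i, (hTb i).symm⟩)
      · exact Or.inr ⟨i, (hTc i).symm⟩
  rw [hset, transport U hU x₁ _, core_count m l hl a ha]
  push_cast
  ring
end

section
/- Every smooth lattice polygon with at least 9 vertices has more than 12 lattice points; that is, if P ⊂ ℝ² is a smooth full-dimensional lattice polytope with at least 9 vertices, then |P ∩ ℤ²| ≥ 13. -/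
open Set

/-- A lattice polytope: convex hull of a finite set of integer points. -/
def IsLatticePolytope {d : ℕ} (P : Set (Fin d → ℝ)) : Prop :=
  ∃ V : Finset (Fin d → ℤ), P = convexHull ℝ (ofInt '' (V : Set (Fin d → ℤ)))

/-- Two vertices are adjacent if the segment between them is an edge
(an extreme subset) of the polytope. -/
def Adjacent {d : ℕ} (P : Set (Fin d → ℝ)) (v w : Fin d → ℝ) : Prop :=
  v ∈ Set.extremePoints ℝ P ∧ w ∈ Set.extremePoints ℝ P ∧ v ≠ w ∧
    IsExtreme ℝ P (segment ℝ v w)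

/-- A polytope is simple if every vertex has exactly `d` neighbours. -/
def IsSimplePolytope {d : ℕ} (P : Set (Fin d → ℝ)) : Prop :=
  ∀ v ∈ Set.extremePoints ℝ P, {w | Adjacent P v w}.ncard = d

/-- A smooth (full-dimensional) lattice polytope: a simple full-dimensional lattice
polytope such that at each vertex the primitive edge directions form a ℤ-basis of ℤ^d. -/
def IsSmoothPolytope {d : ℕ} (P : Set (Fin d → ℝ)) : Prop :=
  IsLatticePolytope P ∧ affineSpan ℝ P = ⊤ ∧ IsSimplePolytope P ∧
    ∀ v ∈ Set.extremePoints ℝ P, ∃ b : Module.Basis (Fin d) ℤ (Fin d → ℤ),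
      (∀ w, Adjacent P v w → ∃ i : Fin d, ∃ c : ℤ, 0 < c ∧ w = v + c • ofInt (b i)) ∧
      (∀ i : Fin d, ∃ w, Adjacent P v w ∧ ∃ c : ℤ, 0 < c ∧ w = v + c • ofInt (b i))

/-- The lattice points of `P`. -/
def latticePts {d : ℕ} (P : Set (Fin d → ℝ)) : Set (Fin d → ℝ) :=
  {x ∈ P | ∃ z : Fin d → ℤ, x = ofInt z}

/-- Unimodular equivalence: `Q` is the image of `P` under `x ↦ Mx + t`
with `M ∈ GL_d(ℤ)` and `t ∈ ℤ^d`. -/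
def UnimodEquiv {d : ℕ} (P Q : Set (Fin d → ℝ)) : Prop :=
  ∃ M : Matrix (Fin d) (Fin d) ℤ, IsUnit M.det ∧ ∃ t : Fin d → ℤ,
    Q = (fun x => (M.map ((↑) : ℤ → ℝ)).mulVec x + ofInt t) '' P


namespace NinePts
abbrev Pt : Type := Fin 2 → ℤ

def par (z : Pt) : Fin 2 → ZMod 2 := fun i => (z i : ZMod 2)

lemma exists_mid {z w : Pt} (h : par z = par w) : ∃ m : Pt, z + w = m + m := by
  refine ⟨fun i => (z i + w i) / 2, ?_⟩
  funext i
  have h2 : ((z i - w i : ℤ) : ZMod 2) = 0 := by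
    have := congrFun h i
    simp only [par] at this
    push_cast
    rw [this]; ring
  have hdvd := (ZMod.intCast_zmod_eq_zero_iff_dvd _ 2).1 h2
  simp only [Pi.add_apply]
  omega

def IsMid (C : Set Pt) (m : Pt) : Prop := ∃ z ∈ C, ∃ w ∈ C, z ≠ w ∧ z + w = m + m

lemma mid_ne_left {a b c m m' : Pt} (e1 : a + b = m + m) (e2 : a + c = m' + m')
    (h : b ≠ c) : m ≠ m' := by
  intro hh
  rw [hh] at e1
  exact h (add_left_cancel (e1.trans e2.symm))

lemma mid_ne_right {a b c m m' : Pt} (e1 : a + c = m + m) (e2 : b + c = m' + m')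
    (h : a ≠ b) : m ≠ m' := by
  intro hh
  rw [hh] at e1
  exact h (add_right_cancel (e1.trans e2.symm))

lemma three_of {F : Finset Pt} (h : 3 ≤ F.card) :
    ∃ a b c, a ∈ F ∧ b ∈ F ∧ c ∈ F ∧ a ≠ b ∧ a ≠ c ∧ b ≠ c := by
  obtain ⟨t, hts, htc⟩ := F.exists_subset_card_eq h
  obtain ⟨a, b, c, hab, hac, hbc, rfl⟩ := Finset.card_eq_three.1 htc
  exact ⟨a, b, c, hts (by simp), hts (by simp), hts (by simp), hab, hac, hbc⟩

lemma four_of {F : Finset Pt} (h : 4 ≤ F.card) :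
    ∃ a b c d, a ∈ F ∧ b ∈ F ∧ c ∈ F ∧ d ∈ F ∧
      a ≠ b ∧ a ≠ c ∧ a ≠ d ∧ b ≠ c ∧ b ≠ d ∧ c ≠ d := by
  classical
  obtain ⟨a, ha⟩ := Finset.card_pos.1 (show 0 < F.card by omega)
  have h3 : 3 ≤ (F.erase a).card := by
    rw [Finset.card_erase_of_mem ha]; omega
  obtain ⟨b, c, d, hb, hc, hd, hbc, hbd, hcd⟩ := three_of h3
  exact ⟨a, b, c, d, ha, Finset.mem_of_mem_erase hb, Finset.mem_of_mem_erase hc,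
    Finset.mem_of_mem_erase hd,
    (Finset.ne_of_mem_erase hb).symm, (Finset.ne_of_mem_erase hc).symm,
    (Finset.ne_of_mem_erase hd).symm, hbc, hbd, hcd⟩

variable {C : Set Pt} {S : Finset Pt}

lemma assemble (hC : ∀ z ∈ C, ∀ w ∈ C, ∀ m : Pt, z + w = m + m → m ∈ C)
    (hScard : S.card = 9) (hSC : ↑S ⊆ C)
    (hExt : ∀ s ∈ S, ∀ z ∈ C, ∀ w ∈ C, z + w = s + s → z = w)
    (t1 t2 t3 t4 : Pt) (h1 : IsMid C t1) (h2 : IsMid C t2) (h3 : IsMid C t3)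
    (h4 : IsMid C t4) (h12 : t1 ≠ t2) (h13 : t1 ≠ t3) (h14 : t1 ≠ t4)
    (h23 : t2 ≠ t3) (h24 : t2 ≠ t4) (h34 : t3 ≠ t4) :
    ∃ T : Finset Pt, T.card = 13 ∧ ↑T ⊆ C := by
  classical
  have hMidC : ∀ m : Pt, IsMid C m → m ∈ C := by
    rintro m ⟨z, hz, w, hw, -, he⟩
    exact hC z hz w hw m he
  have hMidS : ∀ m : Pt, IsMid C m → m ∉ S := by
    rintro m ⟨z, hz, w, hw, hne, he⟩ hm
    exact hne (hExt m hm z hz w hw he)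
  refine ⟨insert t1 (insert t2 (insert t3 (insert t4 S))), ?_, ?_⟩
  · rw [Finset.card_insert_of_notMem (by
        simp only [Finset.mem_insert]
        push_neg
        exact ⟨h12, h13, h14, hMidS _ h1⟩),
      Finset.card_insert_of_notMem (by
        simp only [Finset.mem_insert]
        push_neg
        exact ⟨h23, h24, hMidS _ h2⟩),
      Finset.card_insert_of_notMem (by
        simp only [Finset.mem_insert]
        push_neg
        exact ⟨h34, hMidS _ h3⟩),
      Finset.card_insert_of_notMem (hMidS _ h4), hScard]
  · intro x hx
    simp only [Finset.coe_insert, Set.mem_insert_iff, Finset.mem_coe] at hx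
    rcases hx with rfl | rfl | rfl | rfl | hx
    · exact hMidC _ h1
    · exact hMidC _ h2
    · exact hMidC _ h3
    · exact hMidC _ h4
    · exact hSC hx

/-- If two of the three midpoints lie in the same parity class, we win. -/
lemma mids_win (hC : ∀ z ∈ C, ∀ w ∈ C, ∀ m : Pt, z + w = m + m → m ∈ C)
    (hScard : S.card = 9) (hSC : ↑S ⊆ C)
    (hExt : ∀ s ∈ S, ∀ z ∈ C, ∀ w ∈ C, z + w = s + s → z = w)
    (m1 m2 m3 a : Pt) (ha : a ∈ S)
    (i1 : IsMid C m1) (i2 : IsMid C m2) (i3 : IsMid C m3)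
    (d12 : m1 ≠ m2) (d13 : m1 ≠ m3) (d23 : m2 ≠ m3)
    (hsum : m2 + m3 = m1 + a) (hpar : par m2 = par m3) :
    ∃ T : Finset Pt, T.card = 13 ∧ ↑T ⊆ C := by
  have hMidC : ∀ m : Pt, IsMid C m → m ∈ C := by
    rintro m ⟨z, hz, w, hw, -, he⟩
    exact hC z hz w hw m he
  have hMidS : ∀ m : Pt, IsMid C m → m ∉ S := by
    rintro m ⟨z, hz, w, hw, hne, he⟩ hm
    exact hne (hExt m hm z hz w hw he)
  obtain ⟨p, hp⟩ := exists_mid hpar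
  have ip : IsMid C p := ⟨m2, hMidC _ i2, m3, hMidC _ i3, d23, hp⟩
  have hp1 : p ≠ m1 := by
    intro hh
    rw [hh] at hp
    have : m1 = a := add_left_cancel (hp.symm.trans hsum)
    exact hMidS _ i1 (by rw [this]; exact ha)
  have hp2 : p ≠ m2 := by
    intro hh
    rw [hh] at hp
    exact d23 (add_left_cancel hp).symm
  have hp3 : p ≠ m3 := by
    intro hh
    rw [hh] at hp
    exact d23 (add_right_cancel hp)
  exact assemble hC hScard hSC hExt m1 m2 m3 p i1 i2 i3 ip d12 d13 hp1.symm d23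
    hp2.symm hp3.symm

/-- If a midpoint has the same parity class as a suitable vertex, we win. -/
lemma vert_win (hC : ∀ z ∈ C, ∀ w ∈ C, ∀ m : Pt, z + w = m + m → m ∈ C)
    (hScard : S.card = 9) (hSC : ↑S ⊆ C)
    (hExt : ∀ s ∈ S, ∀ z ∈ C, ∀ w ∈ C, z + w = s + s → z = w)
    (m1 m2 m3 a : Pt) (ha : a ∈ S)
    (i1 : IsMid C m1) (i2 : IsMid C m2) (i3 : IsMid C m3)
    (d12 : m1 ≠ m2) (d13 : m1 ≠ m3) (d23 : m2 ≠ m3)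
    (hsum : m2 + m3 = m1 + a) (hpar : par m1 = par a) :
    ∃ T : Finset Pt, T.card = 13 ∧ ↑T ⊆ C := by
  have hMidC : ∀ m : Pt, IsMid C m → m ∈ C := by
    rintro m ⟨z, hz, w, hw, -, he⟩
    exact hC z hz w hw m he
  have hMidS : ∀ m : Pt, IsMid C m → m ∉ S := by
    rintro m ⟨z, hz, w, hw, hne, he⟩ hm
    exact hne (hExt m hm z hz w hw he)
  obtain ⟨p, hp⟩ := exists_mid hpar
  have hm1a : m1 ≠ a := by
    intro hh
    exact hMidS _ i1 (by rw [hh]; exact ha)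
  have ip : IsMid C p := ⟨m1, hMidC _ i1, a, hSC ha, hm1a, hp⟩
  have hp1 : p ≠ m1 := by
    intro hh
    rw [hh] at hp
    exact hm1a (add_left_cancel hp).symm
  have hp2 : p ≠ m2 := by
    intro hh
    rw [hh] at hp
    exact d23 (add_left_cancel (hsum.trans hp)).symm
  have hp3 : p ≠ m3 := by
    intro hh
    rw [hh] at hp
    exact d23 (add_right_cancel (hsum.trans hp))
  exact assemble hC hScard hSC hExt m1 m2 m3 p i1 i2 i3 ip d12 d13 hp1.symm d23
    hp2.symm hp3.symm

/-- If the parity class of the midpoint `m1` contains two distinct vertices, we win. -/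
lemma pair_win (hC : ∀ z ∈ C, ∀ w ∈ C, ∀ m : Pt, z + w = m + m → m ∈ C)
    (hScard : S.card = 9) (hSC : ↑S ⊆ C)
    (hExt : ∀ s ∈ S, ∀ z ∈ C, ∀ w ∈ C, z + w = s + s → z = w)
    (m1 m2 m3 a : Pt) (ha : a ∈ S)
    (i1 : IsMid C m1) (i2 : IsMid C m2) (i3 : IsMid C m3)
    (d12 : m1 ≠ m2) (d13 : m1 ≠ m3) (d23 : m2 ≠ m3)
    (hsum : m2 + m3 = m1 + a)
    (x1 x2 : Pt) (hx1 : x1 ∈ S) (hx2 : x2 ∈ S) (hx12 : x1 ≠ x2)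
    (hpar1 : par x1 = par m1) (hpar2 : par x2 = par m1) :
    ∃ T : Finset Pt, T.card = 13 ∧ ↑T ⊆ C := by
  have hMidC : ∀ m : Pt, IsMid C m → m ∈ C := by
    rintro m ⟨z, hz, w, hw, -, he⟩
    exact hC z hz w hw m he
  have hMidS : ∀ m : Pt, IsMid C m → m ∉ S := by
    rintro m ⟨z, hz, w, hw, hne, he⟩ hm
    exact hne (hExt m hm z hz w hw he)
  obtain ⟨p1, hp1⟩ := exists_mid hpar1.symm
  obtain ⟨p2, hp2⟩ := exists_mid hpar2.symm
  have hm1x1 : m1 ≠ x1 := fun hh => hMidS _ i1 (by rw [hh]; exact hx1)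
  have hm1x2 : m1 ≠ x2 := fun hh => hMidS _ i1 (by rw [hh]; exact hx2)
  have ip1 : IsMid C p1 := ⟨m1, hMidC _ i1, x1, hSC hx1, hm1x1, hp1⟩
  have ip2 : IsMid C p2 := ⟨m1, hMidC _ i1, x2, hSC hx2, hm1x2, hp2⟩
  have hq1 : p1 ≠ m1 := by
    intro hh
    rw [hh] at hp1
    exact hm1x1 (add_left_cancel hp1).symm
  have hq2 : p2 ≠ m1 := by
    intro hh
    rw [hh] at hp2
    exact hm1x2 (add_left_cancel hp2).symm
  by_cases hb1 : p1 = m2 ∨ p1 = m3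
  · by_cases hb2 : p2 = m2 ∨ p2 = m3
    · have hne : p1 ≠ p2 := by
        intro hh
        rw [hh] at hp1
        exact hx12 (add_left_cancel (hp1.trans hp2.symm))
      exfalso
      have key : x1 + x2 = a + a := by
        rcases hb1 with h | h <;> rcases hb2 with h' | h'
        · exact absurd (h.trans h'.symm) hne
        · funext i
          have c1 := congrFun hp1 i; have c2 := congrFun hp2 i
          have c3 := congrFun hsum i
          have c4 := congrFun h i; have c5 := congrFun h' i
          simp only [Pi.add_apply] at c1 c2 c3 ⊢
          omega
        · funext i
          have c1 := congrFun hp1 i; have c2 := congrFun hp2 i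
          have c3 := congrFun hsum i
          have c4 := congrFun h i; have c5 := congrFun h' i
          simp only [Pi.add_apply] at c1 c2 c3 ⊢
          omega
        · exact absurd (h.trans h'.symm) hne
      exact hx12 (hExt a ha x1 (hSC hx1) x2 (hSC hx2) key)
    · push_neg at hb2
      exact assemble hC hScard hSC hExt m1 m2 m3 p2 i1 i2 i3 ip2 d12 d13 hq2.symm d23
        hb2.1.symm hb2.2.symm
  · push_neg at hb1
    exact assemble hC hScard hSC hExt m1 m2 m3 p1 i1 i2 i3 ip1 d12 d13 hq1.symm d23
      hb1.1.symm hb1.2.symm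

end NinePts

namespace NinePts

lemma core (C : Set Pt) (hC : ∀ z ∈ C, ∀ w ∈ C, ∀ m : Pt, z + w = m + m → m ∈ C)
    (S : Finset Pt) (hScard : S.card = 9) (hSC : ↑S ⊆ C)
    (hExt : ∀ s ∈ S, ∀ z ∈ C, ∀ w ∈ C, z + w = s + s → z = w) :
    ∃ T : Finset Pt, T.card = 13 ∧ ↑T ⊆ C := by
  classical
  have hcard4 : Fintype.card (Fin 2 → ZMod 2) = 4 := by
    rw [Fintype.card_fun]
    simp
  obtain ⟨y0, -, hy0⟩ := Finset.exists_lt_card_fiber_of_mul_lt_card_of_maps_to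
    (f := par) (t := (Finset.univ : Finset (Fin 2 → ZMod 2))) (s := S) (n := 2)
    (fun a _ => Finset.mem_univ _)
    (by rw [Finset.card_univ, hcard4, hScard]; norm_num)
  by_cases hA : ∃ y : Fin 2 → ZMod 2, 4 ≤ (S.filter fun z => par z = y).card
  · obtain ⟨y, hy⟩ := hA
    obtain ⟨p1, p2, p3, p4, h1, h2, h3, h4, n12, n13, n14, n23, n24, n34⟩ := four_of hy
    rw [Finset.mem_filter] at h1 h2 h3 h4
    obtain ⟨h1S, h1p⟩ := h1
    obtain ⟨h2S, h2p⟩ := h2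
    obtain ⟨h3S, h3p⟩ := h3
    obtain ⟨h4S, h4p⟩ := h4
    obtain ⟨m12, e12⟩ := exists_mid (h1p.trans h2p.symm)
    obtain ⟨m13, e13⟩ := exists_mid (h1p.trans h3p.symm)
    obtain ⟨m14, e14⟩ := exists_mid (h1p.trans h4p.symm)
    obtain ⟨m23, e23⟩ := exists_mid (h2p.trans h3p.symm)
    obtain ⟨m24, e24⟩ := exists_mid (h2p.trans h4p.symm)
    have i12 : IsMid C m12 := ⟨p1, hSC h1S, p2, hSC h2S, n12, e12⟩
    have i13 : IsMid C m13 := ⟨p1, hSC h1S, p3, hSC h3S, n13, e13⟩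
    have i14 : IsMid C m14 := ⟨p1, hSC h1S, p4, hSC h4S, n14, e14⟩
    have i23 : IsMid C m23 := ⟨p2, hSC h2S, p3, hSC h3S, n23, e23⟩
    have i24 : IsMid C m24 := ⟨p2, hSC h2S, p4, hSC h4S, n24, e24⟩
    have e12' : p2 + p1 = m12 + m12 := by rw [add_comm]; exact e12
    have e23' : p3 + p2 = m23 + m23 := by rw [add_comm]; exact e23
    have d_12_13 : m12 ≠ m13 := mid_ne_left e12 e13 n23
    have d_12_14 : m12 ≠ m14 := mid_ne_left e12 e14 n24
    have d_13_14 : m13 ≠ m14 := mid_ne_left e13 e14 n34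
    have d_12_23 : m12 ≠ m23 := mid_ne_right e12 e23' n13
    have d_13_23 : m13 ≠ m23 := mid_ne_right e13 e23 n12
    have d_12_24 : m12 ≠ m24 := mid_ne_left e12' e24 n14
    have d_14_24 : m14 ≠ m24 := mid_ne_right e14 e24 n12
    by_cases hd : m14 = m23
    · have d_13_24 : m13 ≠ m24 := by
        intro hcon
        apply n34
        funext i
        have c1 := congrFun e13 i
        have c2 := congrFun e24 i
        have c3 := congrFun e14 i
        have c4 := congrFun e23 i
        have c5 := congrFun hd i
        have c6 := congrFun hcon i
        simp only [Pi.add_apply] at c1 c2 c3 c4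
        omega
      exact assemble hC hScard hSC hExt m12 m13 m14 m24 i12 i13 i14 i24
        d_12_13 d_12_14 d_12_24 d_13_14 d_13_24 d_14_24
    · exact assemble hC hScard hSC hExt m12 m13 m14 m23 i12 i13 i14 i23
        d_12_13 d_12_14 d_12_23 d_13_14 d_13_23 hd
  · push_neg at hA
    obtain ⟨a1, a2, a3, h1, h2, h3, ha12, ha13, ha23⟩ :=
      three_of (show 3 ≤ (S.filter fun z => par z = y0).card by omega)
    rw [Finset.mem_filter] at h1 h2 h3
    obtain ⟨a1S, pa1⟩ := h1
    obtain ⟨a2S, pa2⟩ := h2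
    obtain ⟨a3S, pa3⟩ := h3
    obtain ⟨m12, e12⟩ := exists_mid (pa1.trans pa2.symm)
    obtain ⟨m13, e13⟩ := exists_mid (pa1.trans pa3.symm)
    obtain ⟨m23, e23⟩ := exists_mid (pa2.trans pa3.symm)
    have i12 : IsMid C m12 := ⟨a1, hSC a1S, a2, hSC a2S, ha12, e12⟩
    have i13 : IsMid C m13 := ⟨a1, hSC a1S, a3, hSC a3S, ha13, e13⟩
    have i23 : IsMid C m23 := ⟨a2, hSC a2S, a3, hSC a3S, ha23, e23⟩
    have e23' : a3 + a2 = m23 + m23 := by rw [add_comm]; exact e23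
    have d1 : m12 ≠ m13 := mid_ne_left e12 e13 ha23
    have d2 : m12 ≠ m23 := mid_ne_right e12 e23' ha13
    have d3 : m13 ≠ m23 := mid_ne_right e13 e23 ha12
    have hs1 : m12 + m13 = m23 + a1 := by
      funext i
      have c1 := congrFun e12 i
      have c2 := congrFun e13 i
      have c3 := congrFun e23 i
      simp only [Pi.add_apply] at c1 c2 c3 ⊢
      omega
    have hs2 : m12 + m23 = m13 + a2 := by
      funext i
      have c1 := congrFun e12 i
      have c2 := congrFun e13 i
      have c3 := congrFun e23 i
      simp only [Pi.add_apply] at c1 c2 c3 ⊢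
      omega
    have hs3 : m13 + m23 = m12 + a3 := by
      funext i
      have c1 := congrFun e12 i
      have c2 := congrFun e13 i
      have c3 := congrFun e23 i
      simp only [Pi.add_apply] at c1 c2 c3 ⊢
      omega
    by_cases hq1 : par m12 = par m13
    · exact mids_win hC hScard hSC hExt m23 m12 m13 a1 a1S i23 i12 i13
        d2.symm d3.symm d1 hs1 hq1
    by_cases hq2 : par m12 = par m23
    · exact mids_win hC hScard hSC hExt m13 m12 m23 a2 a2S i13 i12 i23
        d1.symm d3 d2 hs2 hq2
    by_cases hq3 : par m13 = par m23
    · exact mids_win hC hScard hSC hExt m12 m13 m23 a3 a3S i12 i13 i23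
        d1 d2 d3 hs3 hq3
    by_cases hv1 : par m12 = y0
    · exact vert_win hC hScard hSC hExt m12 m13 m23 a3 a3S i12 i13 i23
        d1 d2 d3 hs3 (hv1.trans pa3.symm)
    by_cases hv2 : par m13 = y0
    · exact vert_win hC hScard hSC hExt m13 m12 m23 a2 a2S i13 i12 i23
        d1.symm d3 d2 hs2 (hv2.trans pa2.symm)
    by_cases hv3 : par m23 = y0
    · exact vert_win hC hScard hSC hExt m23 m12 m13 a1 a1S i23 i12 i13
        d2.symm d3.symm d1 hs1 (hv3.trans pa1.symm)
    have huniv : ∀ y : Fin 2 → ZMod 2, y = y0 ∨ y = par m12 ∨ y = par m13 ∨ y = par m23 := by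
      intro y
      by_contra hcon
      push_neg at hcon
      obtain ⟨g0, g1, g2, g3⟩ := hcon
      have hle : ({y, y0, par m12, par m13, par m23} : Finset (Fin 2 → ZMod 2)).card ≤ 4 := by
        have h := Finset.card_le_univ ({y, y0, par m12, par m13, par m23} :
          Finset (Fin 2 → ZMod 2))
        rwa [hcard4] at h
      have h5 : ({y, y0, par m12, par m13, par m23} : Finset (Fin 2 → ZMod 2)).card = 5 := by
        rw [Finset.card_insert_of_notMem (by
            simp only [Finset.mem_insert, Finset.mem_singleton]
            push_neg
            exact ⟨g0, g1, g2, g3⟩),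
          Finset.card_insert_of_notMem (by
            simp only [Finset.mem_insert, Finset.mem_singleton]
            push_neg
            exact ⟨fun h => hv1 h.symm, fun h => hv2 h.symm, fun h => hv3 h.symm⟩),
          Finset.card_insert_of_notMem (by
            simp only [Finset.mem_insert, Finset.mem_singleton]
            push_neg
            exact ⟨hq1, hq2⟩),
          Finset.card_insert_of_notMem (by
            simp only [Finset.mem_singleton]
            exact hq3),
          Finset.card_singleton]
      omega
    have hf0 : (S.filter fun z => par z = y0).card = 3 :=
      le_antisymm (by have := hA y0; omega) (by omega)
    have hR : (S.filter fun z => ¬ par z = y0).card = 6 := by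
      have h := Finset.card_filter_add_card_filter_not (s := S)
        (p := fun z => par z = y0)
      omega
    have hsub : (S.filter fun z => ¬ par z = y0) ⊆
        ((S.filter fun z => par z = par m12) ∪ (S.filter fun z => par z = par m13)) ∪
          (S.filter fun z => par z = par m23) := by
      intro x hx
      rw [Finset.mem_filter] at hx
      rcases huniv (par x) with h | h | h | h
      · exact absurd h hx.2
      · exact Finset.mem_union_left _ (Finset.mem_union_left _ (Finset.mem_filter.2 ⟨hx.1, h⟩))
      · exact Finset.mem_union_left _ (Finset.mem_union_right _ (Finset.mem_filter.2 ⟨hx.1, h⟩))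
      · exact Finset.mem_union_right _ (Finset.mem_filter.2 ⟨hx.1, h⟩)
    have hcount : 6 ≤ (S.filter fun z => par z = par m12).card +
        (S.filter fun z => par z = par m13).card +
        (S.filter fun z => par z = par m23).card := by
      have hle1 := Finset.card_le_card hsub
      have hle2 := Finset.card_union_le
        ((S.filter fun z => par z = par m12) ∪ (S.filter fun z => par z = par m13))
        (S.filter fun z => par z = par m23)
      have hle3 := Finset.card_union_le (S.filter fun z => par z = par m12)
        (S.filter fun z => par z = par m13)
      omega
    have hsplit : 2 ≤ (S.filter fun z => par z = par m12).card ∨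
        2 ≤ (S.filter fun z => par z = par m13).card ∨
        2 ≤ (S.filter fun z => par z = par m23).card := by omega
    rcases hsplit with h | h | h
    · obtain ⟨x1, hx1, x2, hx2, hx12⟩ := Finset.one_lt_card.1 (show 1 <
        (S.filter fun z => par z = par m12).card by omega)
      rw [Finset.mem_filter] at hx1 hx2
      exact pair_win hC hScard hSC hExt m12 m13 m23 a3 a3S i12 i13 i23 d1 d2 d3 hs3
        x1 x2 hx1.1 hx2.1 hx12 hx1.2 hx2.2
    · obtain ⟨x1, hx1, x2, hx2, hx12⟩ := Finset.one_lt_card.1 (show 1 <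
        (S.filter fun z => par z = par m13).card by omega)
      rw [Finset.mem_filter] at hx1 hx2
      exact pair_win hC hScard hSC hExt m13 m12 m23 a2 a2S i13 i12 i23 d1.symm d3 d2 hs2
        x1 x2 hx1.1 hx2.1 hx12 hx1.2 hx2.2
    · obtain ⟨x1, hx1, x2, hx2, hx12⟩ := Finset.one_lt_card.1 (show 1 <
        (S.filter fun z => par z = par m23).card by omega)
      rw [Finset.mem_filter] at hx1 hx2
      exact pair_win hC hScard hSC hExt m23 m12 m13 a1 a1S i23 i12 i13 d2.symm d3.symm d1 hs1
        x1 x2 hx1.1 hx2.1 hx12 hx1.2 hx2.2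

end NinePts

/-- Every smooth lattice polygon with at least 9 vertices has at least 13 lattice points. -/
theorem smooth_polygon_nine_vertices (P : Set (Fin 2 → ℝ)) (hP : IsSmoothPolytope P)
    (hv : 9 ≤ (Set.extremePoints ℝ P).ncard) :
    13 ≤ (latticePts P).ncard := by
  classical
  obtain ⟨⟨V, hV⟩, -, -, -⟩ := hP
  have hinj : Function.Injective (ofInt (d := 2)) := by
    intro z w h
    funext i
    have h0 := congrFun h i
    simp only [ofInt] at h0
    exact_mod_cast h0
  have hPconv : Convex ℝ P := by rw [hV]; exact convex_convexHull ℝ _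
  have hEsub : Set.extremePoints ℝ P ⊆ ofInt '' (V : Set (Fin 2 → ℤ)) := by
    rw [hV]; exact extremePoints_convexHull_subset
  set C : Set (Fin 2 → ℤ) := {z | ofInt z ∈ P} with hCdef
  have hC : ∀ z ∈ C, ∀ w ∈ C, ∀ m : Fin 2 → ℤ, z + w = m + m → m ∈ C := by
    intro z hz w hw m hm
    have key : ofInt m = (1/2 : ℝ) • ofInt z + (1/2 : ℝ) • ofInt w := by
      funext i
      have h0 := congrFun hm i
      simp only [Pi.add_apply] at h0
      simp only [ofInt, Pi.add_apply, Pi.smul_apply, smul_eq_mul]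
      have h2 : (z i : ℝ) + (w i : ℝ) = (m i : ℝ) + (m i : ℝ) := by exact_mod_cast h0
      linarith
    show ofInt m ∈ P
    rw [key]
    exact hPconv hz hw (by norm_num) (by norm_num) (by norm_num)
  set A : Finset (Fin 2 → ℤ) := V.filter (fun z => ofInt z ∈ Set.extremePoints ℝ P) with hAdef
  have hEA : Set.extremePoints ℝ P = ofInt '' (A : Set (Fin 2 → ℤ)) := by
    apply subset_antisymm
    · intro x hx
      obtain ⟨z, hzV, rfl⟩ := hEsub hx
      exact ⟨z, Finset.mem_coe.2 (Finset.mem_filter.2 ⟨hzV, hx⟩), rfl⟩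
    · rintro x ⟨z, hz, rfl⟩
      exact (Finset.mem_filter.1 (Finset.mem_coe.1 hz)).2
  have hAcard : 9 ≤ A.card := by
    have h1 : (Set.extremePoints ℝ P).ncard = A.card := by
      rw [hEA, Set.ncard_image_of_injective _ hinj, Set.ncard_coe_finset]
    omega
  obtain ⟨S, hSA, hScard⟩ := A.exists_subset_card_eq hAcard
  have hSE : ∀ s ∈ S, ofInt s ∈ Set.extremePoints ℝ P := fun s hs =>
    (Finset.mem_filter.1 (hSA hs)).2
  have hSC : (S : Set (Fin 2 → ℤ)) ⊆ C := by
    intro s hs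
    show ofInt s ∈ P
    exact extremePoints_subset (hSE s (Finset.mem_coe.1 hs))
  have hExt : ∀ s ∈ S, ∀ z ∈ C, ∀ w ∈ C, z + w = s + s → z = w := by
    intro s hs z hz w hw he
    have hseg : ofInt s ∈ openSegment ℝ (ofInt z) (ofInt w) := by
      refine ⟨1/2, 1/2, by norm_num, by norm_num, by norm_num, ?_⟩
      funext i
      have h0 := congrFun he i
      simp only [Pi.add_apply] at h0
      simp only [ofInt, Pi.add_apply, Pi.smul_apply, smul_eq_mul]
      have h2 : (z i : ℝ) + (w i : ℝ) = (s i : ℝ) + (s i : ℝ) := by exact_mod_cast h0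
      linarith
    obtain ⟨hzs, hws⟩ := (mem_extremePoints.1 (hSE s hs)).2 (ofInt z) hz (ofInt w) hw hseg
    exact hinj (hzs.trans hws.symm)
  obtain ⟨T, hT13, hTC⟩ := NinePts.core C hC S hScard hSC hExt
  have hfinV : (ofInt '' (V : Set (Fin 2 → ℤ))).Finite := V.finite_toSet.image _
  have hPcomp : IsCompact P := by rw [hV]; exact hfinV.isCompact_convexHull ℝ
  obtain ⟨R, hR⟩ := hPcomp.isBounded.subset_closedBall 0
  have hZfin : ({z : Fin 2 → ℤ | ofInt z ∈ P}).Finite := by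
    apply Set.Finite.subset (Set.finite_Icc (fun _ => -⌈R⌉) (fun _ => ⌈R⌉))
    intro z hz
    have hnorm : ‖ofInt z‖ ≤ R := by
      have h := hR hz
      rwa [Metric.mem_closedBall, dist_zero_right] at h
    have hco : ∀ i, |(z i : ℝ)| ≤ R := by
      intro i
      have h1 := norm_le_pi_norm (ofInt z) i
      rw [Real.norm_eq_abs] at h1
      exact h1.trans hnorm
    have hup : ∀ i, z i ≤ ⌈R⌉ := by
      intro i
      have h1 : (z i : ℝ) ≤ (⌈R⌉ : ℝ) := le_trans (abs_le.1 (hco i)).2 (Int.le_ceil R)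
      exact_mod_cast h1
    have hlo : ∀ i, -⌈R⌉ ≤ z i := by
      intro i
      have h1 : ((-⌈R⌉ : ℤ) : ℝ) ≤ (z i : ℝ) := by
        push_cast
        have := Int.le_ceil R
        have h2 := (abs_le.1 (hco i)).1
        linarith
      exact_mod_cast h1
    exact Set.mem_Icc.2 ⟨hlo, hup⟩
  have hlatfin : (latticePts P).Finite := by
    apply Set.Finite.subset (hZfin.image ofInt)
    rintro x ⟨hxP, z, rfl⟩
    exact ⟨z, hxP, rfl⟩
  have hsub2 : (ofInt '' (T : Set (Fin 2 → ℤ))) ⊆ latticePts P := by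
    rintro x ⟨t, ht, rfl⟩
    exact ⟨hTC ht, t, rfl⟩
  have himg : (ofInt '' (T : Set (Fin 2 → ℤ))).ncard = 13 := by
    rw [Set.ncard_image_of_injective _ hinj, Set.ncard_coe_finset, hT13]
  calc (13 : ℕ) = (ofInt '' (T : Set (Fin 2 → ℤ))).ncard := himg.symm
    _ ≤ (latticePts P).ncard := Set.ncard_le_ncard hsub2 hlatfin
end

section
/- Every smooth lattice polygon with exactly 5 or exactly 6 vertices has at least one interior lattice point; that is, if P ⊂ ℝ² is a smooth full-dimensional lattice polytope with 5 or 6 vertices, then the topological interior of P contains a point of ℤ². -/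
open Set

/-- Cone lemma: if the segment [v,w1] is extreme in the convex set P, and B is the
second coordinate functional of the basis (w1-v, w2-v), then B ≥ 0 on P - v. -/
lemma coneLemma (P : Set (Fin 2 → ℝ)) (hP : Convex ℝ P)
    (v w1 w2 : Fin 2 → ℝ) (hv : v ∈ P) (hw1 : w1 ∈ P) (hw2 : w2 ∈ P)
    (hext : IsExtreme ℝ P (segment ℝ v w1))
    (A B : (Fin 2 → ℝ) →ₗ[ℝ] ℝ)
    (hrep : ∀ x, x = A x • (w1 - v) + B x • (w2 - v))
    (hB1 : B (w1 - v) = 0)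
    (p : Fin 2 → ℝ) (hp : p ∈ P) : 0 ≤ B (p - v) := by
  by_contra h
  push_neg at h
  set K1 : ℝ := 1/2 - A (p - v) with hK1
  set K2 : ℝ := - B (p - v) with hK2
  have hK2pos : 0 < K2 := by simp only [hK2]; linarith
  set den : ℝ := 4 * (1 + |K1| + K2) with hden
  have hdenpos : 0 < den := by positivity
  set s : ℝ := 1 / den with hs
  have hspos : 0 < s := by positivity
  set t1 : ℝ := 1/2 + s * K1 with ht1
  set t2 : ℝ := s * K2 with ht2
  set t0 : ℝ := 1 - t1 - t2 with ht0
  have hsK1 : s * |K1| ≤ 1/4 := by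
    rw [hs, div_mul_eq_mul_div, one_mul, div_le_iff₀ hdenpos, hden]
    nlinarith [abs_nonneg K1]
  have hsK2 : s * K2 ≤ 1/4 := by
    rw [hs, div_mul_eq_mul_div, one_mul, div_le_iff₀ hdenpos, hden]
    nlinarith [abs_nonneg K1]
  have hK1abs : -|K1| ≤ K1 := neg_abs_le K1
  have hK1abs' : K1 ≤ |K1| := le_abs_self K1
  have ht1pos : 0 < t1 := by
    have h' : s * K1 ≥ -(s * |K1|) := by nlinarith
    rw [ht1]; linarith
  have ht2pos : 0 < t2 := by positivity
  have ht0nn : 0 ≤ t0 := by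
    have h' : s * K1 ≤ s * |K1| := by nlinarith
    rw [ht0, ht1, ht2]; linarith
  set z : Fin 2 → ℝ := t0 • v + t1 • w1 + t2 • w2 with hz
  have hzP : z ∈ P := by
    have h12 : 0 < t1 + t2 := by linarith
    have hy : (t1/(t1+t2)) • w1 + (t2/(t1+t2)) • w2 ∈ P :=
      hP hw1 hw2 (by positivity) (by positivity) (by field_simp)
    have := hP hv hy ht0nn (le_of_lt h12) (by simp only [ht0]; ring)
    have heq : t0 • v + (t1+t2) • ((t1/(t1+t2)) • w1 + (t2/(t1+t2)) • w2) = z := by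
      rw [smul_add, smul_smul, smul_smul, mul_div_cancel₀ _ (ne_of_gt h12),
        mul_div_cancel₀ _ (ne_of_gt h12), hz, add_assoc]
    rwa [heq] at this
  set m : Fin 2 → ℝ := (1/2 : ℝ) • v + (1/2 : ℝ) • w1 with hm
  have hmseg : m ∈ segment ℝ v w1 := ⟨1/2, 1/2, by norm_num, by norm_num, by norm_num, rfl⟩
  -- the key algebraic identity : s • p + z = (1+s) • m
  have hkey : s • p + z = (1+s) • m := by
    have hp' : p - v = A (p - v) • (w1 - v) + B (p - v) • (w2 - v) := hrep _
    rw [hz, hm, ht0, ht1, ht2, hK1, hK2]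
    linear_combination (norm := module) s • hp'
  have h1s : (0:ℝ) < 1 + s := by linarith
  have hmopen : m ∈ openSegment ℝ p z := by
    refine ⟨s/(1+s), 1/(1+s), by positivity, by positivity, by field_simp; ring, ?_⟩
    have heq2 : (s/(1+s)) • p + (1/(1+s)) • z = (1/(1+s)) • (s • p + z) := by
      match_scalars <;> field_simp
    rw [heq2, hkey, smul_smul, one_div, inv_mul_cancel₀ (ne_of_gt h1s), one_smul]
  have hpseg := hext.2 hp hzP hmseg hmopen
  obtain ⟨a, b, ha, hb, hab, habv⟩ := hpseg
  have hb' : p - v = b • (w1 - v) := by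
    have ha' : a = 1 - b := by linarith
    rw [← habv, ha']; module
  have : B (p - v) = 0 := by rw [hb', map_smul, hB1, smul_eq_mul, mul_zero]
  linarith


/-- A point strictly between two lattice points, extracted from integer cross/dot data. -/
lemma betweenLemma (p q r : ℤ × ℤ)
    (hcross : (q.1 - p.1) * (r.2 - p.2) = (q.2 - p.2) * (r.1 - p.1))
    (hdot : (q.1 - p.1) * (r.1 - p.1) + (q.2 - p.2) * (r.2 - p.2) < 0) :
    ∃ t : ℝ, 0 < t ∧ t < 1 ∧
      (1 - t) * (q.1 : ℝ) + t * (r.1 : ℝ) = (p.1 : ℝ) ∧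
      (1 - t) * (q.2 : ℝ) + t * (r.2 : ℝ) = (p.2 : ℝ) := by
  set α : ℝ := (q.1 : ℝ) - p.1 with hα
  set β : ℝ := (q.2 : ℝ) - p.2 with hβ
  set γ : ℝ := (r.1 : ℝ) - p.1 with hγ
  set δ : ℝ := (r.2 : ℝ) - p.2 with hδ
  have hcrossR : α * δ = β * γ := by
    simp only [hα, hβ, hγ, hδ]; exact_mod_cast hcross
  have hdotR : α * γ + β * δ < 0 := by
    have : ((q.1 - p.1) * (r.1 - p.1) + (q.2 - p.2) * (r.2 - p.2) : ℝ) < 0 := by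
      exact_mod_cast hdot
    push_cast at this
    simp only [hα, hβ, hγ, hδ]; linarith
  set n : ℝ := α ^ 2 + β ^ 2 with hn
  have hnpos : 0 < n := by
    rcases eq_or_lt_of_le (by positivity : (0:ℝ) ≤ n) with h | h
    · exfalso
      have hα0 : α = 0 := by nlinarith [sq_nonneg α, sq_nonneg β]
      have hβ0 : β = 0 := by nlinarith [sq_nonneg α, sq_nonneg β]
      rw [hα0, hβ0] at hdotR; linarith
    · exact h
  set d : ℝ := α * γ + β * δ with hd
  have hden : 0 < n - d := by linarith
  refine ⟨n / (n - d), by positivity, ?_, ?_, ?_⟩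
  · rw [div_lt_one hden]; linarith
  · have : α + (n / (n - d)) * (γ - α) = 0 := by
      field_simp
      linear_combination (-β) * hcrossR
    simp only [hα, hγ] at this ⊢
    linarith
  · have : β + (n / (n - d)) * (δ - β) = 0 := by
      field_simp
      linear_combination α * hcrossR
    simp only [hβ, hδ] at this ⊢
    linarith


lemma three_ints (a b c : ℤ) (hab : a ≠ b) (hac : a ≠ c) (hbc : b ≠ c) :
    (b < a ∧ a < c) ∨ (c < a ∧ a < b) ∨ (a < b ∧ b < c) ∨ (c < b ∧ b < a) ∨
    (a < c ∧ c < b) ∨ (b < c ∧ c < a) := by omega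

/-- Each horizontal line contains at most two points of a set with the
"no point strictly between two others" property. -/
lemma line_card (T : Finset (ℤ × ℤ)) (k : ℤ)
    (hb : ∀ p ∈ T, ∀ q ∈ T, ∀ r ∈ T,
      (q.1 - p.1) * (r.2 - p.2) = (q.2 - p.2) * (r.1 - p.1) →
      0 ≤ (q.1 - p.1) * (r.1 - p.1) + (q.2 - p.2) * (r.2 - p.2)) :
    (T.filter (fun p => p.2 = k)).card ≤ 2 := by
  by_contra h
  push_neg at h
  obtain ⟨a, b, c, ha, hbmem, hc, hab, hac, hbc⟩ := Finset.two_lt_card_iff.mp h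
  obtain ⟨ha', hay⟩ := Finset.mem_filter.mp ha
  obtain ⟨hb', hby⟩ := Finset.mem_filter.mp hbmem
  obtain ⟨hc', hcy⟩ := Finset.mem_filter.mp hc
  -- a.2 = b.2 = c.2 = k, so first coordinates are distinct
  have hab1 : a.1 ≠ b.1 := fun h1 => hab (Prod.ext h1 (hay.trans hby.symm))
  have hac1 : a.1 ≠ c.1 := fun h1 => hac (Prod.ext h1 (hay.trans hcy.symm))
  have hbc1 : b.1 ≠ c.1 := fun h1 => hbc (Prod.ext h1 (hby.trans hcy.symm))
  -- pick the middle one and contradict hb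
  have key : ∀ p q r : ℤ × ℤ, p ∈ T → q ∈ T → r ∈ T →
      p.2 = k → q.2 = k → r.2 = k → q.1 < p.1 → p.1 < r.1 → False := by
    intro p q r hp hq hr hpk hqk hrk h1 h2
    have := hb p hp q hq r hr (by rw [hpk, hqk, hrk]; ring)
    rw [hpk, hqk, hrk] at this
    nlinarith
  rcases three_ints a.1 b.1 c.1 hab1 hac1 hbc1 with ⟨h1,h2⟩|⟨h1,h2⟩|⟨h1,h2⟩|⟨h1,h2⟩|⟨h1,h2⟩|⟨h1,h2⟩
  · exact key a b c ha' hb' hc' hay hby hcy h1 h2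
  · exact key a c b ha' hc' hb' hay hcy hby h1 h2
  · exact key b a c hb' ha' hc' hby hay hcy h1 h2
  · exact key b c a hb' hc' ha' hby hcy hay h1 h2
  · exact key c a b hc' ha' hb' hcy hay hby h1 h2
  · exact key c b a hc' hb' ha' hcy hby hay h1 h2

lemma keyCount (T : Finset (ℤ × ℤ)) (a1 a2 : ℝ) (h1 : 0 ≤ a1) (h12 : a1 ≤ a2)
    (hpos : 0 < a1 + a2)
    (hxn : ∀ p ∈ T, 0 ≤ p.1) (hyn : ∀ p ∈ T, 0 ≤ p.2)
    (hf : ∀ p ∈ T, a1 * p.1 + a2 * p.2 ≤ a1 + a2)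
    (hb : ∀ p ∈ T, ∀ q ∈ T, ∀ r ∈ T,
      (q.1 - p.1) * (r.2 - p.2) = (q.2 - p.2) * (r.1 - p.1) →
      0 ≤ (q.1 - p.1) * (r.1 - p.1) + (q.2 - p.2) * (r.2 - p.2)) :
    T.card ≤ 4 := by
  have ha2 : 0 < a2 := by linarith
  -- every point has y ∈ {0, 1, 2}
  have hy2 : ∀ p ∈ T, p.2 ≤ 2 := by
    intro p hp
    have h1' := hf p hp
    have hx := hxn p hp
    have : a2 * p.2 ≤ a1 + a2 := by
      have : 0 ≤ a1 * p.1 := mul_nonneg h1 (by exact_mod_cast hx)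
      linarith
    have : (p.2 : ℝ) ≤ 2 := by
      rw [← mul_le_mul_iff_right₀ ha2]; nlinarith
    exact_mod_cast this
  -- points with y = 2 are (0,2), and force a1 = a2
  have hy2' : ∀ p ∈ T, p.2 = 2 → p = (0, 2) ∧ a1 = a2 := by
    intro p hp hp2
    have h1' := hf p hp
    rw [hp2] at h1'
    have hx := hxn p hp
    have hxr : (0:ℝ) ≤ (p.1 : ℝ) := by exact_mod_cast hx
    have h0 : 0 ≤ a1 * p.1 := mul_nonneg h1 hxr
    have ha12 : a1 = a2 := by push_cast at h1'; nlinarith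
    have hx0 : p.1 = 0 := by
      by_contra hne
      have : (1:ℝ) ≤ (p.1:ℝ) := by exact_mod_cast (by omega : 1 ≤ p.1)
      push_cast at h1'; nlinarith
    exact ⟨Prod.ext hx0 hp2, ha12⟩
  -- partition by y
  set T0 := T.filter (fun p => p.2 = 0) with hT0
  set T1 := T.filter (fun p => p.2 = 1) with hT1
  set T2 := T.filter (fun p => p.2 = 2) with hT2
  have hcover : T ⊆ T0 ∪ T1 ∪ T2 := by
    intro p hp
    have := hyn p hp
    have := hy2 p hp
    have h02 : p.2 = 0 ∨ p.2 = 1 ∨ p.2 = 2 := by omega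
    simp only [hT0, hT1, hT2, Finset.mem_union, Finset.mem_filter]
    tauto
  have hc0 : T0.card ≤ 2 := line_card T 0 hb
  have hc1 : T1.card ≤ 2 := line_card T 1 hb
  have hc2 : T2.card ≤ 1 := by
    apply Finset.card_le_one.mpr
    intro p hp q hq
    obtain ⟨hpT, hp2⟩ := Finset.mem_filter.mp hp
    obtain ⟨hqT, hq2⟩ := Finset.mem_filter.mp hq
    rw [(hy2' p hpT hp2).1, (hy2' q hqT hq2).1]
  have hcard5 : T.card ≤ 5 := by
    calc T.card ≤ (T0 ∪ T1 ∪ T2).card := Finset.card_le_card hcover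
    _ ≤ (T0 ∪ T1).card + T2.card := Finset.card_union_le _ _
    _ ≤ T0.card + T1.card + T2.card := by
        have := Finset.card_union_le T0 T1; omega
    _ ≤ 5 := by omega
  -- now rule out card = 5
  by_contra hcon
  push_neg at hcon
  have hcard : T.card = 5 := by omega
  have hEq : T0.card = 2 ∧ T1.card = 2 ∧ T2.card = 1 := by
    have := Finset.card_le_card hcover
    have h01 := Finset.card_union_le T0 T1
    have h012 := Finset.card_union_le (T0 ∪ T1) T2
    omega
  -- (0,2) ∈ T and a1 = a2
  obtain ⟨p2, hp2⟩ := Finset.card_eq_one.mp hEq.2.2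
  have hp2T : p2 ∈ T2 := by rw [hp2]; exact Finset.mem_singleton_self _
  obtain ⟨hp2T', hp2y⟩ := Finset.mem_filter.mp hp2T
  obtain ⟨hp2eq, ha12⟩ := hy2' p2 hp2T' hp2y
  have h02T : ((0,2) : ℤ × ℤ) ∈ T := hp2eq ▸ hp2T'
  -- with a1 = a2 > 0 : x + y ≤ 2 for all points
  have hxy : ∀ p ∈ T, p.1 + p.2 ≤ 2 := by
    intro p hp
    have := hf p hp
    rw [← ha12] at this
    have h1p : 0 < a1 := by linarith
    have : (p.1 : ℝ) + p.2 ≤ 2 := by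
      rw [← mul_le_mul_iff_right₀ h1p]; nlinarith
    exact_mod_cast this
  -- T1 = {(0,1),(1,1)}
  have hT1sub : T1 ⊆ {(0,1),(1,1)} := by
    intro p hp
    obtain ⟨hpT, hpy⟩ := Finset.mem_filter.mp hp
    have := hxn p hpT
    have := hxy p hpT
    have : p.1 = 0 ∨ p.1 = 1 := by omega
    rcases this with h | h
    · simp [Finset.mem_insert, Prod.ext_iff, h, hpy]
    · simp [Finset.mem_insert, Prod.ext_iff, h, hpy]
  have hT1eq : T1 = {(0,1),(1,1)} :=
    Finset.eq_of_subset_of_card_le hT1sub (by rw [hEq.2.1]; decide)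
  have h01T : ((0,1) : ℤ × ℤ) ∈ T :=
    (Finset.mem_filter.mp (hT1eq ▸ (by decide : ((0,1):ℤ×ℤ) ∈ ({(0,1),(1,1)} : Finset (ℤ×ℤ))))).1
  have h11T : ((1,1) : ℤ × ℤ) ∈ T :=
    (Finset.mem_filter.mp (hT1eq ▸ (by decide : ((1,1):ℤ×ℤ) ∈ ({(0,1),(1,1)} : Finset (ℤ×ℤ))))).1
  -- (0,0) ∉ T : else (0,0),(0,1),(0,2) collinear
  have h00 : ((0,0) : ℤ × ℤ) ∉ T := by
    intro h00T
    have := hb (0,1) h01T (0,0) h00T (0,2) h02T (by norm_num)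
    norm_num at this
  have hT0sub : T0 ⊆ {(1,0),(2,0)} := by
    intro p hp
    obtain ⟨hpT, hpy⟩ := Finset.mem_filter.mp hp
    have := hxn p hpT
    have := hxy p hpT
    have hx012 : p.1 = 0 ∨ p.1 = 1 ∨ p.1 = 2 := by omega
    rcases hx012 with h | h | h
    · exfalso; apply h00; rwa [show ((0,0):ℤ×ℤ) = p from (Prod.ext h.symm hpy.symm)]
    · simp [Finset.mem_insert, Prod.ext_iff, h, hpy]
    · simp [Finset.mem_insert, Prod.ext_iff, h, hpy]
  have hT0eq : T0 = {(1,0),(2,0)} :=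
    Finset.eq_of_subset_of_card_le hT0sub (by rw [hEq.1]; decide)
  have h20T : ((2,0) : ℤ × ℤ) ∈ T :=
    (Finset.mem_filter.mp (hT0eq ▸ (by decide : ((2,0):ℤ×ℤ) ∈ ({(1,0),(2,0)} : Finset (ℤ×ℤ))))).1
  -- (1,1) is the midpoint of (2,0) and (0,2)
  have := hb (1,1) h11T (2,0) h20T (0,2) h02T (by norm_num)
  norm_num at this


lemma detLemma (b : Module.Basis (Fin 2) ℤ (Fin 2 → ℤ)) :
    b 0 0 * b 1 1 - b 0 1 * b 1 0 = 1 ∨ b 0 0 * b 1 1 - b 0 1 * b 1 0 = -1 := by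
  classical
  have h0 := b.sum_repr (fun j => if j = 0 then (1:ℤ) else 0)
  have h1 := b.sum_repr (fun j => if j = 0 then (0:ℤ) else 1)
  rw [Fin.sum_univ_two] at h0 h1
  have h00 := congrFun h0 0
  have h01 := congrFun h0 1
  have h10 := congrFun h1 0
  have h11 := congrFun h1 1
  simp only [Pi.add_apply, Pi.smul_apply, smul_eq_mul] at h00 h01 h10 h11
  norm_num at h00 h01 h10 h11
  set m0 := b.repr (fun j => if j = 0 then (1:ℤ) else 0) 0
  set m1 := b.repr (fun j => if j = 0 then (1:ℤ) else 0) 1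
  set n0 := b.repr (fun j => if j = 0 then (0:ℤ) else 1) 0
  set n1 := b.repr (fun j => if j = 0 then (0:ℤ) else 1) 1
  have key : (b 0 0 * b 1 1 - b 0 1 * b 1 0) * (m0 * n1 - m1 * n0) = 1 := by
    linear_combination (n0 * b 0 1 + n1 * b 1 1) * h00 + h11 - (n0 * b 0 0 + n1 * b 1 0) * h01
  exact Int.isUnit_iff.mp (IsUnit.of_mul_eq_one _ key)

set_option maxHeartbeats 1000000

/-- Every smooth lattice polygon with exactly 5 or exactly 6 vertices has an interior
lattice point. -/
theorem smooth_pentagon_hexagon_interior_point (P : Set (Fin 2 → ℝ))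
    (hP : IsSmoothPolytope P)
    (hv : (Set.extremePoints ℝ P).ncard = 5 ∨ (Set.extremePoints ℝ P).ncard = 6) :
    ∃ x ∈ interior P, ∃ z : Fin 2 → ℤ, x = ofInt z := by
  obtain ⟨⟨V, hPV⟩, hspan, hsimple, hsmooth⟩ := hP
  have hPconv : Convex ℝ P := by rw [hPV]; exact convex_convexHull ℝ _
  have hEsub : Set.extremePoints ℝ P ⊆ ofInt '' ↑V := by
    rw [hPV]; exact extremePoints_convexHull_subset
  have hEfin : (Set.extremePoints ℝ P).Finite := (V.finite_toSet.image _).subset hEsub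
  have hEne : (Set.extremePoints ℝ P).Nonempty := by
    apply Set.nonempty_of_ncard_ne_zero; rcases hv with h | h <;> omega
  obtain ⟨v, hvE⟩ := hEne
  obtain ⟨b, _hball, hbex⟩ := hsmooth v hvE
  obtain ⟨w1, hadj1, c1, hc1, hw1⟩ := hbex 0
  obtain ⟨w2, hadj2, c2, hc2, hw2⟩ := hbex 1
  have hvP : v ∈ P := extremePoints_subset hvE
  have hw1E : w1 ∈ Set.extremePoints ℝ P := hadj1.2.1
  have hw2E : w2 ∈ Set.extremePoints ℝ P := hadj2.2.1
  have hw1P : w1 ∈ P := extremePoints_subset hw1E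
  have hw2P : w2 ∈ P := extremePoints_subset hw2E
  have hc1r : (1:ℝ) ≤ (c1:ℝ) := by exact_mod_cast hc1
  have hc2r : (1:ℝ) ≤ (c2:ℝ) := by exact_mod_cast hc2
  have hc1pos : (0:ℝ) < (c1:ℝ) := by linarith
  have hc2pos : (0:ℝ) < (c2:ℝ) := by linarith
  have hw1r : w1 = v + (c1:ℝ) • ofInt (b 0) := by
    rw [hw1, Int.cast_smul_eq_zsmul]
  have hw2r : w2 = v + (c2:ℝ) • ofInt (b 1) := by
    rw [hw2, Int.cast_smul_eq_zsmul]
  -- the determinant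
  set Dr : ℝ := ((b 0 0 * b 1 1 - b 0 1 * b 1 0 : ℤ) : ℝ) with hDrdef
  have hDr : Dr * Dr = 1 := by
    rcases detLemma b with h | h <;> rw [hDrdef, h] <;> norm_num
  have hcast : ((b 0 0 : ℤ):ℝ) * ((b 1 1 : ℤ):ℝ) - ((b 0 1: ℤ):ℝ) * ((b 1 0:ℤ):ℝ) = Dr := by
    rw [hDrdef]; push_cast; ring
  -- dual functionals
  set A₀ : (Fin 2 → ℝ) →ₗ[ℝ] ℝ :=
    { toFun := fun x => (x 0 * ((b 1 1 : ℤ):ℝ) - x 1 * ((b 1 0 : ℤ):ℝ)) * Dr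
      map_add' := by intro x y; simp only [Pi.add_apply]; ring
      map_smul' := by intro c x; simp only [Pi.smul_apply, smul_eq_mul, RingHom.id_apply]; ring }
    with hA₀def
  set B₀ : (Fin 2 → ℝ) →ₗ[ℝ] ℝ :=
    { toFun := fun x => (((b 0 0 : ℤ):ℝ) * x 1 - ((b 0 1 : ℤ):ℝ) * x 0) * Dr
      map_add' := by intro x y; simp only [Pi.add_apply]; ring
      map_smul' := by intro c x; simp only [Pi.smul_apply, smul_eq_mul, RingHom.id_apply]; ring }
    with hB₀def
  have hA₀app : ∀ x : Fin 2 → ℝ, A₀ x = (x 0 * ((b 1 1 : ℤ):ℝ) - x 1 * ((b 1 0 : ℤ):ℝ)) * Dr :=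
    fun x => rfl
  have hB₀app : ∀ x : Fin 2 → ℝ, B₀ x = (((b 0 0 : ℤ):ℝ) * x 1 - ((b 0 1 : ℤ):ℝ) * x 0) * Dr :=
    fun x => rfl
  have hofInt : ∀ (z : Fin 2 → ℤ) (j : Fin 2), ofInt z j = ((z j : ℤ) : ℝ) := fun z j => rfl
  -- representation identity
  have hrep : ∀ x : Fin 2 → ℝ, x = A₀ x • ofInt (b 0) + B₀ x • ofInt (b 1) := by
    intro x
    funext j
    fin_cases j
    · show x 0 = (A₀ x • ofInt (b 0) + B₀ x • ofInt (b 1)) 0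
      rw [Pi.add_apply, Pi.smul_apply, Pi.smul_apply, smul_eq_mul, smul_eq_mul,
        hA₀app, hB₀app, hofInt, hofInt]
      linear_combination (-(Dr * x 0)) * hcast - x 0 * hDr
    · show x 1 = (A₀ x • ofInt (b 0) + B₀ x • ofInt (b 1)) 1
      rw [Pi.add_apply, Pi.smul_apply, Pi.smul_apply, smul_eq_mul, smul_eq_mul,
        hA₀app, hB₀app, hofInt, hofInt]
      linear_combination (-(Dr * x 1)) * hcast - x 1 * hDr
  have hA1 : A₀ (ofInt (b 0)) = 1 := by
    rw [hA₀app, hofInt, hofInt]; linear_combination Dr * hcast + hDr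
  have hA2 : A₀ (ofInt (b 1)) = 0 := by rw [hA₀app, hofInt, hofInt]; ring
  have hB1 : B₀ (ofInt (b 0)) = 0 := by rw [hB₀app, hofInt, hofInt]; ring
  have hB2 : B₀ (ofInt (b 1)) = 1 := by
    rw [hB₀app, hofInt, hofInt]; linear_combination Dr * hcast + hDr
  -- cone containment: both coordinates nonnegative on P
  have hw1v : w1 - v = (c1:ℝ) • ofInt (b 0) := by rw [hw1r]; abel
  have hw2v : w2 - v = (c2:ℝ) • ofInt (b 1) := by rw [hw2r]; abel
  have hBnn : ∀ p ∈ P, 0 ≤ B₀ (p - v) := by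
    intro p hp
    have hrep' : ∀ x : Fin 2 → ℝ,
        x = ((1/(c1:ℝ)) • A₀) x • (w1 - v) + ((1/(c2:ℝ)) • B₀) x • (w2 - v) := by
      intro x
      rw [hw1v, hw2v, LinearMap.smul_apply, LinearMap.smul_apply, smul_eq_mul, smul_eq_mul,
        smul_smul, smul_smul,
        show 1/(c1:ℝ) * A₀ x * (c1:ℝ) = A₀ x by field_simp,
        show 1/(c2:ℝ) * B₀ x * (c2:ℝ) = B₀ x by field_simp]
      exact hrep x
    have hB'1 : ((1/(c2:ℝ)) • B₀) (w1 - v) = 0 := by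
      rw [hw1v, LinearMap.smul_apply, map_smul, hB1]
      simp
    have := coneLemma P hPconv v w1 w2 hvP hw1P hw2P hadj1.2.2.2
      ((1/(c1:ℝ)) • A₀) ((1/(c2:ℝ)) • B₀) hrep' hB'1 p hp
    rw [LinearMap.smul_apply, smul_eq_mul] at this
    exact (mul_nonneg_iff_of_pos_left (by positivity : (0:ℝ) < 1/(c2:ℝ))).mp this
  have hAnn : ∀ p ∈ P, 0 ≤ A₀ (p - v) := by
    intro p hp
    have hrep' : ∀ x : Fin 2 → ℝ,
        x = ((1/(c2:ℝ)) • B₀) x • (w2 - v) + ((1/(c1:ℝ)) • A₀) x • (w1 - v) := by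
      intro x
      rw [hw1v, hw2v, LinearMap.smul_apply, LinearMap.smul_apply, smul_eq_mul, smul_eq_mul,
        smul_smul, smul_smul,
        show 1/(c1:ℝ) * A₀ x * (c1:ℝ) = A₀ x by field_simp,
        show 1/(c2:ℝ) * B₀ x * (c2:ℝ) = B₀ x by field_simp]
      rw [add_comm]; exact hrep x
    have hA'1 : ((1/(c1:ℝ)) • A₀) (w2 - v) = 0 := by
      rw [hw2v, LinearMap.smul_apply, map_smul, hA2]
      simp
    have := coneLemma P hPconv v w2 w1 hvP hw2P hw1P hadj2.2.2.2
      ((1/(c2:ℝ)) • B₀) ((1/(c1:ℝ)) • A₀) hrep' hA'1 p hp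
    rw [LinearMap.smul_apply, smul_eq_mul] at this
    exact (mul_nonneg_iff_of_pos_left (by positivity : (0:ℝ) < 1/(c1:ℝ))).mp this
  -- candidate interior point
  obtain ⟨zv, _, hzv⟩ := hEsub hvE
  by_contra hcon
  push_neg at hcon
  set q : Fin 2 → ℝ := v + ofInt (b 0) + ofInt (b 1) with hqdef
  have hqlat : q = ofInt (zv + b 0 + b 1) := by
    funext j
    rw [hqdef, Pi.add_apply, Pi.add_apply, ← hzv]
    show ofInt zv j + ofInt (b 0) j + ofInt (b 1) j = _
    rw [hofInt, hofInt, hofInt, hofInt]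
    simp [Pi.add_apply]
  have hqni : q ∉ interior P := fun h => hcon q h (zv + b 0 + b 1) hqlat
  have hIne : (interior P).Nonempty :=
    (hPconv.interior_nonempty_iff_affineSpan_eq_top).mpr hspan
  obtain ⟨x0, hx0⟩ := hIne
  obtain ⟨f, hf⟩ := geometric_hahn_banach_open_point hPconv.interior isOpen_interior hqni
  have hfle : ∀ p ∈ P, f p ≤ f q := by
    intro p hp
    by_contra hgt
    push_neg at hgt
    have hx0q : f x0 < f q := hf x0 hx0
    have h1 : (0:ℝ) < f p - f x0 := by linarith
    set t : ℝ := (f p - f q)/(2*(f p - f x0)) with htdef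
    have ht0 : 0 < t := by
      rw [htdef]; exact div_pos (by linarith) (by linarith)
    have ht1 : t ≤ 1/2 := by
      rw [htdef, div_le_iff₀ (by linarith : (0:ℝ) < 2*(f p - f x0))]
      nlinarith
    have hmem : t • x0 + (1-t) • p ∈ interior P :=
      hPconv.combo_interior_self_mem_interior hx0 hp ht0 (by linarith) (by ring)
    have hlt := hf _ hmem
    rw [map_add, map_smul, map_smul, smul_eq_mul, smul_eq_mul] at hlt
    have htp : t * (f p - f x0) = (f p - f q)/2 := by
      rw [htdef]; field_simp
    nlinarith
  set a1 : ℝ := f (ofInt (b 0)) with ha1def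
  set a2 : ℝ := f (ofInt (b 1)) with ha2def
  have hfq : f q = f v + a1 + a2 := by rw [hqdef, map_add, map_add]
  have hvu1P : v + ofInt (b 0) ∈ P := by
    have heq : v + ofInt (b 0) = (1 - 1/(c1:ℝ)) • v + (1/(c1:ℝ)) • w1 := by
      rw [hw1r]
      match_scalars <;> field_simp <;> ring
    rw [heq]
    exact hPconv hvP hw1P (by rw [sub_nonneg, div_le_one hc1pos]; linarith)
      (by positivity) (by ring)
  have hvu2P : v + ofInt (b 1) ∈ P := by
    have heq : v + ofInt (b 1) = (1 - 1/(c2:ℝ)) • v + (1/(c2:ℝ)) • w2 := by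
      rw [hw2r]
      match_scalars <;> field_simp <;> ring
    rw [heq]
    exact hPconv hvP hw2P (by rw [sub_nonneg, div_le_one hc2pos]; linarith)
      (by positivity) (by ring)
  have ha2nn : 0 ≤ a2 := by
    have := hfle _ hvu1P
    rw [map_add, hfq] at this
    linarith
  have ha1nn : 0 ≤ a1 := by
    have := hfle _ hvu2P
    rw [map_add, hfq] at this
    linarith
  have hfx : ∀ x : Fin 2 → ℝ, f x = A₀ x * a1 + B₀ x * a2 := by
    intro x
    conv_lhs => rw [hrep x]
    rw [map_add, map_smul, map_smul, smul_eq_mul, smul_eq_mul]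
  have hpos : 0 < a1 + a2 := by
    rcases lt_or_ge 0 (a1 + a2) with h | h
    · exact h
    · exfalso
      have ha1z : a1 = 0 := by linarith
      have ha2z : a2 = 0 := by linarith
      have hzero : ∀ x : Fin 2 → ℝ, f x = 0 := by
        intro x; rw [hfx, ha1z, ha2z]; ring
      have := hf x0 hx0
      rw [hzero, hzero] at this
      exact lt_irrefl _ this
  -- integer coordinates of lattice points
  have hintA : ∀ z : Fin 2 → ℤ, A₀ (ofInt z) =
      (((z 0 * b 1 1 - z 1 * b 1 0) * (b 0 0 * b 1 1 - b 0 1 * b 1 0) : ℤ) : ℝ) := by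
    intro z
    rw [hA₀app, hofInt, hofInt, hDrdef]; push_cast; ring
  have hintB : ∀ z : Fin 2 → ℤ, B₀ (ofInt z) =
      (((b 0 0 * z 1 - b 0 1 * z 0) * (b 0 0 * b 1 1 - b 0 1 * b 1 0) : ℤ) : ℝ) := by
    intro z
    rw [hB₀app, hofInt, hofInt, hDrdef]; push_cast; ring
  have hsub : ∀ e ∈ Set.extremePoints ℝ P, ∃ z : Fin 2 → ℤ, e - v = ofInt z := by
    intro e he
    obtain ⟨z, _, hz⟩ := hEsub he
    refine ⟨z - zv, ?_⟩
    funext j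
    rw [Pi.sub_apply, ← hz, ← hzv, hofInt, hofInt, hofInt, Pi.sub_apply]
    push_cast; ring
  set g : (Fin 2 → ℝ) → ℤ × ℤ := fun e => (⌊A₀ (e - v)⌋, ⌊B₀ (e - v)⌋) with hgdef
  have hg : ∀ e ∈ Set.extremePoints ℝ P,
      (((g e).1 : ℝ) = A₀ (e - v) ∧ ((g e).2 : ℝ) = B₀ (e - v)) := by
    intro e he
    obtain ⟨z, hz⟩ := hsub e he
    constructor
    · show ((⌊A₀ (e - v)⌋ : ℤ) : ℝ) = _
      rw [hz, hintA, Int.floor_intCast]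
    · show ((⌊B₀ (e - v)⌋ : ℤ) : ℝ) = _
      rw [hz, hintB, Int.floor_intCast]
  have hpt : ∀ e ∈ Set.extremePoints ℝ P,
      e = v + ((g e).1 : ℝ) • ofInt (b 0) + ((g e).2 : ℝ) • ofInt (b 1) := by
    intro e he
    obtain ⟨h1, h2⟩ := hg e he
    have h3 := hrep (e - v)
    rw [h1, h2, add_assoc, ← h3]
    abel
  set Tf : Finset (ℤ × ℤ) := Finset.image g hEfin.toFinset with hTfdef
  have hinj : Set.InjOn g hEfin.toFinset := by
    intro x hx y hy hxy
    have hxE : x ∈ Set.extremePoints ℝ P := by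
      rwa [← Set.Finite.mem_toFinset hEfin]
    have hyE : y ∈ Set.extremePoints ℝ P := by
      rwa [← Set.Finite.mem_toFinset hEfin]
    rw [hpt x hxE, hpt y hyE, hxy]
  have hTcard : Tf.card = (Set.extremePoints ℝ P).ncard := by
    rw [hTfdef, Finset.card_image_of_injOn hinj, Set.ncard_eq_toFinset_card _ hEfin]
  have hmemE : ∀ p ∈ Tf, ∃ e ∈ Set.extremePoints ℝ P, g e = p := by
    intro p hp
    obtain ⟨e, he, hge⟩ := Finset.mem_image.mp hp
    exact ⟨e, (Set.Finite.mem_toFinset hEfin).mp he, hge⟩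
  -- the four hypotheses of the counting lemma
  have hxT : ∀ p ∈ Tf, 0 ≤ p.1 := by
    intro p hp
    obtain ⟨e, he, rfl⟩ := hmemE p hp
    have h1 := hAnn e (extremePoints_subset he)
    rw [← (hg e he).1] at h1
    exact_mod_cast h1
  have hyT : ∀ p ∈ Tf, 0 ≤ p.2 := by
    intro p hp
    obtain ⟨e, he, rfl⟩ := hmemE p hp
    have h1 := hBnn e (extremePoints_subset he)
    rw [← (hg e he).2] at h1
    exact_mod_cast h1
  have hfT : ∀ p ∈ Tf, a1 * p.1 + a2 * p.2 ≤ a1 + a2 := by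
    intro p hp
    obtain ⟨e, he, rfl⟩ := hmemE p hp
    have hfe := hfle e (extremePoints_subset he)
    rw [hpt e he] at hfe
    rw [map_add, map_add, map_smul, map_smul, smul_eq_mul, smul_eq_mul, hfq] at hfe
    rw [← ha1def, ← ha2def] at hfe
    linarith [hfe]
  have hbT : ∀ p ∈ Tf, ∀ q ∈ Tf, ∀ r ∈ Tf,
      (q.1 - p.1) * (r.2 - p.2) = (q.2 - p.2) * (r.1 - p.1) →
      0 ≤ (q.1 - p.1) * (r.1 - p.1) + (q.2 - p.2) * (r.2 - p.2) := by
    intro p hp q hq r hr hcross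
    by_contra hneg
    push_neg at hneg
    obtain ⟨ep, hep, hgp⟩ := hmemE p hp
    obtain ⟨eq', heq, hgq⟩ := hmemE q hq
    obtain ⟨er, her, hgr⟩ := hmemE r hr
    obtain ⟨t, ht0, ht1, hco1, hco2⟩ := betweenLemma p q r hcross hneg
    have hopen : ep ∈ openSegment ℝ eq' er := by
      refine ⟨1 - t, t, by linarith, ht0, by ring, ?_⟩
      rw [hpt ep hep, hpt eq' heq, hpt er her, hgp, hgq, hgr, ← hco1, ← hco2]
      module
    have hqep := (hep.2 (extremePoints_subset heq) (extremePoints_subset her) hopen)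
    rw [← hgq, hqep, hgp] at hcross hneg
    nlinarith [hneg]
  -- conclude via the counting lemma
  have hcard4 : Tf.card ≤ 4 := by
    rcases le_or_gt a1 a2 with hle | hlt
    · exact keyCount Tf a1 a2 ha1nn hle hpos hxT hyT hfT hbT
    · set Ts : Finset (ℤ × ℤ) := Tf.image Prod.swap with hTsdef
      have hcardeq : Ts.card = Tf.card := Finset.card_image_of_injective Tf Prod.swap_injective
      have hmemS : ∀ p ∈ Ts, Prod.swap p ∈ Tf := by
        intro p hp
        obtain ⟨p0, hp0, rfl⟩ := Finset.mem_image.mp hp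
        rwa [Prod.swap_swap]
      have h4 := keyCount Ts a2 a1 ha2nn (le_of_lt hlt) (by linarith) ?_ ?_ ?_ ?_
      · omega
      · intro p hp; exact hyT _ (hmemS p hp)
      · intro p hp; exact hxT _ (hmemS p hp)
      · intro p hp
        have h2 := hfT _ (hmemS p hp)
        simp only [Prod.fst_swap, Prod.snd_swap] at h2
        linarith [h2]
      · intro p hp q hq r hr hcross
        have h2 := hbT _ (hmemS p hp) _ (hmemS q hq) _ (hmemS r hr)
          (by simp only [Prod.fst_swap, Prod.snd_swap]; linarith [hcross])
        simp only [Prod.fst_swap, Prod.snd_swap] at h2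
        linarith [h2]
  rw [hTcard] at hcard4
  rcases hv with h5 | h5 <;> omega
end

section
/- Let N be a positive integer, let a ∈ ℤ, and let P ⊂ ℝ² be a smooth full-dimensional lattice polytope with exactly 4 vertices whose set of primitive outer facet normals is {(1,0), (0,1), (0,−1), (−1,−a)}. If |P ∩ ℤ²| ≤ N, then −N ≤ a ≤ N. -/
open Set

/-- The dot product of an integer vector with a real vector. -/
def dotZR {d : ℕ} (n : Fin d → ℤ) (x : Fin d → ℝ) : ℝ := ∑ i, (n i : ℝ) * x i

/-- `n` is a primitive outer facet normal of `P` if `n` is primitive and the set of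
points of `P` maximizing `⟨n, ·⟩` is an edge of `P`. -/
def IsOuterFacetNormal {d : ℕ} (P : Set (Fin d → ℝ)) (n : Fin d → ℤ) : Prop :=
  Finset.univ.gcd n = 1 ∧ ∃ c : ℝ, (∀ x ∈ P, dotZR n x ≤ c) ∧
    ∃ v w, Adjacent P v w ∧ {x ∈ P | dotZR n x = c} = segment ℝ v w

@[simp] lemma ofInt_apply {d : ℕ} (z : Fin d → ℤ) (i : Fin d) : ofInt z i = (z i : ℝ) := rfl

lemma eq_fin2 {x y : Fin 2 → ℝ} (h0 : x 0 = y 0) (h1 : x 1 = y 1) : x = y := by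
  funext i; fin_cases i <;> assumption

lemma dot_10 (x : Fin 2 → ℝ) : dotZR ![1,0] x = x 0 := by
  simp [dotZR, Fin.sum_univ_two]

lemma dot_01 (x : Fin 2 → ℝ) : dotZR ![0,1] x = x 1 := by
  simp [dotZR, Fin.sum_univ_two]

lemma dot_0m1 (x : Fin 2 → ℝ) : dotZR ![0,-1] x = -x 1 := by
  simp [dotZR, Fin.sum_univ_two]

lemma dot_slant (a : ℤ) (x : Fin 2 → ℝ) : dotZR ![-1,-a] x = -x 0 - (a:ℝ) * x 1 := by
  simp [dotZR, Fin.sum_univ_two]; ring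

lemma not_span_top_of_const_coord {P : Set (Fin 2 → ℝ)} (i : Fin 2) (c : ℝ)
    (h : ∀ x ∈ P, x i = c) (hspan : affineSpan ℝ P = ⊤) : False := by
  let S : AffineSubspace ℝ (Fin 2 → ℝ) :=
    { carrier := {x | x i = c}
      smul_vsub_vadd_mem' := by
        intro t p₁ p₂ p₃ h₁ h₂ h₃
        simp only [Set.mem_setOf_eq] at *
        simp [h₁, h₂, h₃] }
  have htop : (⊤ : AffineSubspace ℝ (Fin 2 → ℝ)) ≤ S := hspan ▸ affineSpan_le.mpr h
  have hmem : (fun _ => c + 1 : Fin 2 → ℝ) ∈ S := htop trivial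
  have : c + 1 = c := hmem
  linarith

lemma seg_mem {P : Set (Fin 2 → ℝ)} (hconv : Convex ℝ P) (zA zB : Fin 2 → ℤ)
    (hA : ofInt zA ∈ P) (hB : ofInt zB ∈ P) (hy : zA 1 = zB 1) (k : ℤ)
    (hk1 : zA 0 ≤ k) (hk2 : k ≤ zB 0) : ofInt ![k, zA 1] ∈ P := by
  rcases eq_or_lt_of_le (hk1.trans hk2) with heq | hlt
  · have hk : k = zA 0 := le_antisymm (heq ▸ hk2) hk1
    have hE : ofInt ![k, zA 1] = ofInt zA := by
      funext i; fin_cases i <;> simp [ofInt, hk]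
    rwa [hE]
  · set t : ℝ := ((k : ℝ) - (zA 0 : ℝ)) / ((zB 0 : ℝ) - (zA 0 : ℝ)) with ht
    have hd : (0:ℝ) < (zB 0 : ℝ) - (zA 0 : ℝ) := by
      have : (zA 0 : ℝ) < (zB 0 : ℝ) := by exact_mod_cast hlt
      linarith
    have ht0 : 0 ≤ t := div_nonneg (by exact_mod_cast sub_nonneg.mpr hk1) hd.le
    have ht1 : t ≤ 1 := by
      rw [div_le_one hd]
      have : (k : ℝ) ≤ (zB 0 : ℝ) := by exact_mod_cast hk2
      linarith
    have hmem := hconv hA hB (by linarith : (0:ℝ) ≤ 1 - t) ht0 (by ring)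
    have htmul : t * ((zB 0 : ℝ) - (zA 0 : ℝ)) = (k : ℝ) - (zA 0 : ℝ) :=
      div_mul_cancel₀ _ hd.ne'
    have hE : (1 - t) • ofInt zA + t • ofInt zB = ofInt ![k, zA 1] := by
      funext i; fin_cases i
      · show (1 - t) * (zA 0 : ℝ) + t * (zB 0 : ℝ) = ((![k, zA 1] : Fin 2 → ℤ) 0 : ℝ)
        simp only [Matrix.cons_val_zero]
        linear_combination htmul
      · show (1 - t) * (zA 1 : ℝ) + t * (zB 1 : ℝ) = ((![k, zA 1] : Fin 2 → ℤ) 1 : ℝ)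
        simp only [Matrix.cons_val_one, Matrix.head_cons, hy, Matrix.cons_val_zero]
        ring
    rwa [hE] at hmem

lemma count_bound {P : Set (Fin 2 → ℝ)} (hfin : (latticePts P).Finite) (hconv : Convex ℝ P)
    (zA zB : Fin 2 → ℤ) (hA : ofInt zA ∈ P) (hB : ofInt zB ∈ P) (hy : zA 1 = zB 1)
    (hx : zA 0 ≤ zB 0) : zB 0 - zA 0 + 1 ≤ ((latticePts P).ncard : ℤ) := by
  classical
  set F : Finset (Fin 2 → ℝ) :=
    (Finset.Icc (zA 0) (zB 0)).image (fun k => ofInt ![k, zA 1]) with hF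
  have hinj : Set.InjOn (fun k => ofInt ![k, zA 1]) (Finset.Icc (zA 0) (zB 0)) := by
    intro i _ j _ hij
    have h0 := congrFun hij 0
    simp only [ofInt, Matrix.cons_val_zero] at h0
    exact_mod_cast h0
  have hcard : F.card = (Finset.Icc (zA 0) (zB 0)).card :=
    Finset.card_image_of_injOn hinj
  have hsub : (F : Set (Fin 2 → ℝ)) ⊆ latticePts P := by
    intro x hx'
    simp only [hF, Finset.coe_image, Set.mem_image, Finset.mem_coe, Finset.mem_Icc] at hx'
    obtain ⟨k, ⟨hk1, hk2⟩, rfl⟩ := hx'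
    exact ⟨seg_mem hconv zA zB hA hB hy k hk1 hk2, ![k, zA 1], rfl⟩
  have h1 : F.card ≤ (latticePts P).ncard := by
    rw [← Set.ncard_coe_finset]
    exact Set.ncard_le_ncard hsub hfin
  rw [hcard, Int.card_Icc] at h1
  omega

lemma lattice_finite {P : Set (Fin 2 → ℝ)} (V : Finset (Fin 2 → ℤ))
    (hPV : P = convexHull ℝ (ofInt '' (V : Set (Fin 2 → ℤ)))) : (latticePts P).Finite := by
  have hcomp : IsCompact P := by
    rw [hPV]; exact (((V : Set (Fin 2 → ℤ))).toFinite.image _).isCompact_convexHull ℝ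
  obtain ⟨C, hC⟩ := isBounded_iff_forall_norm_le.mp hcomp.isBounded
  have hsub : latticePts P ⊆
      ofInt '' (Set.Icc (fun _ => -⌈C⌉) (fun _ => ⌈C⌉) : Set (Fin 2 → ℤ)) := by
    rintro x ⟨hxP, z, rfl⟩
    refine ⟨z, ⟨?_, ?_⟩, rfl⟩ <;> intro i
    · have h1 : |(z i : ℝ)| ≤ C := by
        calc |(z i : ℝ)| = ‖ofInt z i‖ := rfl
        _ ≤ ‖ofInt z‖ := norm_le_pi_norm (ofInt z) i
        _ ≤ C := hC _ hxP
      have h2 : -(⌈C⌉ : ℝ) ≤ (z i : ℝ) := by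
        have := Int.le_ceil C
        have := abs_le.mp h1
        linarith
      exact_mod_cast h2
    · have h1 : |(z i : ℝ)| ≤ C := by
        calc |(z i : ℝ)| = ‖ofInt z i‖ := rfl
        _ ≤ ‖ofInt z‖ := norm_le_pi_norm (ofInt z) i
        _ ≤ C := hC _ hxP
      have h2 : (z i : ℝ) ≤ (⌈C⌉ : ℝ) := by
        have := Int.le_ceil C
        have := abs_le.mp h1
        linarith
      exact_mod_cast h2
  exact ((Set.finite_Icc _ _).image _).subset hsub

lemma final_arith (N : ℕ) (a h T L : ℤ) (hh : 1 ≤ h)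
    (hTN : T + 1 ≤ (N:ℤ)) (hLN : L + 1 ≤ (N:ℤ))
    (hlow : -L ≤ a * h) (hhigh : a * h ≤ T) :
    -(N : ℤ) ≤ a ∧ a ≤ (N:ℤ) := by
  constructor
  · rcases le_or_gt 0 a with ha | ha
    · linarith
    · nlinarith [mul_nonneg (by linarith : (0:ℤ) ≤ -a) (by linarith : (0:ℤ) ≤ h - 1)]
  · rcases le_or_gt 0 a with ha | ha
    · nlinarith [mul_nonneg ha (by linarith : (0:ℤ) ≤ h - 1)]
    · linarith

lemma edge_spec {P : Set (Fin 2 → ℝ)} {n : Fin 2 → ℤ} (h : IsOuterFacetNormal P n) :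
    ∃ c : ℝ, (∀ x ∈ P, dotZR n x ≤ c) ∧ ∃ v w : Fin 2 → ℝ,
      v ∈ Set.extremePoints ℝ P ∧ w ∈ Set.extremePoints ℝ P ∧ v ≠ w ∧
      v ∈ P ∧ w ∈ P ∧ dotZR n v = c ∧ dotZR n w = c := by
  obtain ⟨-, c, hc, v, w, ⟨hv, hw, hvw, -⟩, hseg⟩ := h
  have hv' : v ∈ {x ∈ P | dotZR n x = c} := by
    rw [hseg]; exact left_mem_segment ℝ v w
  have hw' : w ∈ {x ∈ P | dotZR n x = c} := by
    rw [hseg]; exact right_mem_segment ℝ v w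
  exact ⟨c, hc, v, w, hv, hw, hvw, hv'.1, hw'.1, hv'.2, hw'.2⟩

/-- A smooth lattice quadrilateral whose normal fan is that of the Hirzebruch surface
`F_a` and which has at most `N` lattice points satisfies `-N ≤ a ≤ N`. -/
theorem hirzebruch_parameter_bound (N : ℕ) (hN : 0 < N) (a : ℤ)
    (P : Set (Fin 2 → ℝ)) (hP : IsSmoothPolytope P)
    (hv : (Set.extremePoints ℝ P).ncard = 4)
    (hnormals : {n : Fin 2 → ℤ | IsOuterFacetNormal P n} =
      {![1, 0], ![0, 1], ![0, -1], ![-1, -a]})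
    (hcard : (latticePts P).ncard ≤ N) :
    -(N : ℤ) ≤ a ∧ a ≤ (N : ℤ) := by
  obtain ⟨⟨V, hPV⟩, hspan, -, -⟩ := hP
  have hconv : Convex ℝ P := hPV ▸ convex_convexHull ℝ _
  have hfin : (latticePts P).Finite := lattice_finite V hPV
  have hlat : ∀ v, v ∈ Set.extremePoints ℝ P → ∃ z : Fin 2 → ℤ, v = ofInt z := by
    intro v hvE
    rw [hPV] at hvE
    obtain ⟨z, _, hz⟩ := extremePoints_convexHull_subset hvE
    exact ⟨z, hz.symm⟩
  have hmemN : ∀ n ∈ ({![1, 0], ![0, 1], ![0, -1], ![-1, -a]} : Set (Fin 2 → ℤ)),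
      IsOuterFacetNormal P n := by
    intro n hn; rw [← hnormals] at hn; exact hn
  -- the right edge (normal (1,0))
  obtain ⟨cr, hcrle, u1, u2, hu1E, hu2E, hu12, hu1P, hu2P, hu1c, hu2c⟩ :=
    edge_spec (hmemN ![1,0] (by simp))
  rw [dot_10] at hu1c hu2c
  have hcrle' : ∀ x ∈ P, x 0 ≤ cr := fun x hx => by
    have := hcrle x hx; rwa [dot_10] at this
  -- the top edge (normal (0,1))
  obtain ⟨ct, hctle, p, q, hpE, hqE, hpq, hpP, hqP, hpc, hqc⟩ :=
    edge_spec (hmemN ![0,1] (by simp))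
  rw [dot_01] at hpc hqc
  have hctle' : ∀ x ∈ P, x 1 ≤ ct := fun x hx => by
    have := hctle x hx; rwa [dot_01] at this
  -- the bottom edge (normal (0,-1))
  obtain ⟨cb, hcble, r, s, hrE, hsE, hrs, hrP, hsP, hrc, hsc⟩ :=
    edge_spec (hmemN ![0,-1] (by simp))
  rw [dot_0m1] at hrc hsc
  have hyble : ∀ x ∈ P, -cb ≤ x 1 := fun x hx => by
    have := hcble x hx; rw [dot_0m1] at this; linarith
  have hr1 : r 1 = -cb := by linarith
  have hs1 : s 1 = -cb := by linarith
  -- the slant edge (normal (-1,-a))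
  obtain ⟨cl, hclle, m1, m2, hm1E, hm2E, hm12, hm1P, hm2P, hm1c, hm2c⟩ :=
    edge_spec (hmemN ![-1,-a] (by simp))
  rw [dot_slant] at hm1c hm2c
  -- the height is positive
  have hba : -cb < ct := by
    rcases lt_or_ge (-cb) ct with h | h
    · exact h
    · exact absurd hspan (fun hs => not_span_top_of_const_coord 1 ct
        (fun x hx => le_antisymm (hctle' x hx) (le_trans h (hyble x hx))) hs)
  -- the four extreme points
  have hne_ct : ∀ v w : Fin 2 → ℝ, v 1 = ct → w 1 = -cb → v ≠ w := by
    intro v w h1 h2 h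
    rw [h] at h1; rw [h1] at h2; linarith
  have hpr : p ≠ r := hne_ct p r hpc hr1
  have hps : p ≠ s := hne_ct p s hpc hs1
  have hqr : q ≠ r := hne_ct q r hqc hr1
  have hqs : q ≠ s := hne_ct q s hqc hs1
  have h4 : ({p, q, r, s} : Set (Fin 2 → ℝ)).ncard = 4 := by
    rw [Set.ncard_insert_of_notMem (by simp [hpq, hpr, hps]),
        Set.ncard_insert_of_notMem (by simp [hqr, hqs]),
        Set.ncard_pair hrs]
  have hEfin : (Set.extremePoints ℝ P).Finite := by
    by_contra h
    rw [Set.Infinite.ncard h] at hv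
    omega
  have hsubE : ({p, q, r, s} : Set (Fin 2 → ℝ)) ⊆ Set.extremePoints ℝ P := by
    intro x hx
    simp only [Set.mem_insert_iff, Set.mem_singleton_iff] at hx
    rcases hx with rfl | rfl | rfl | rfl <;> assumption
  have heqE := Set.eq_of_subset_of_ncard_le hsubE (by rw [hv, h4]) hEfin
  have hclass : ∀ v, v ∈ Set.extremePoints ℝ P → (v = p ∨ v = q) ∨ (v = r ∨ v = s) := by
    intro v hvE
    rw [← heqE] at hvE
    simp only [Set.mem_insert_iff, Set.mem_singleton_iff] at hvE
    tauto
  have hy1 : ∀ v, (v = p ∨ v = q) → v 1 = ct := by rintro v (rfl | rfl) <;> assumption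
  have hy2 : ∀ v, (v = r ∨ v = s) → v 1 = -cb := by rintro v (rfl | rfl) <;> assumption
  -- the right edge joins a top vertex and a bottom vertex
  have hu12y : u1 1 ≠ u2 1 := fun h => hu12 (eq_fin2 (hu1c.trans hu2c.symm) h)
  have hrt : ∃ v, (v = p ∨ v = q) ∧ v 0 = cr := by
    rcases hclass u1 hu1E with h1 | h1
    · exact ⟨u1, h1, hu1c⟩
    · rcases hclass u2 hu2E with h2 | h2
      · exact ⟨u2, h2, hu2c⟩
      · exact absurd ((hy2 _ h1).trans (hy2 _ h2).symm) hu12y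
  have hrb : ∃ v, (v = r ∨ v = s) ∧ v 0 = cr := by
    rcases hclass u1 hu1E with h1 | h1
    · rcases hclass u2 hu2E with h2 | h2
      · exact absurd ((hy1 _ h1).trans (hy1 _ h2).symm) hu12y
      · exact ⟨u2, h2, hu2c⟩
    · exact ⟨u1, h1, hu1c⟩
  -- the slant edge joins a top vertex and a bottom vertex
  have hm12y : m1 1 ≠ m2 1 := by
    intro h
    apply hm12
    refine eq_fin2 ?_ h
    rw [h] at hm1c
    linarith
  have hslant : ∃ vt vb : Fin 2 → ℝ, (vt = p ∨ vt = q) ∧ (vb = r ∨ vb = s) ∧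
      vb 0 - vt 0 = (a:ℝ) * (ct - (-cb)) := by
    rcases hclass m1 hm1E with h1 | h1 <;> rcases hclass m2 hm2E with h2 | h2
    · exact absurd ((hy1 _ h1).trans (hy1 _ h2).symm) hm12y
    · refine ⟨m1, m2, h1, h2, ?_⟩
      have e1 := hm1c; have e2 := hm2c
      rw [hy1 _ h1] at e1; rw [hy2 _ h2] at e2
      linear_combination e1 - e2
    · refine ⟨m2, m1, h2, h1, ?_⟩
      have e1 := hm2c; have e2 := hm1c
      rw [hy1 _ h2] at e1; rw [hy2 _ h1] at e2
      linear_combination e1 - e2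
    · exact absurd ((hy2 _ h1).trans (hy2 _ h2).symm) hm12y
  -- integer coordinates of the four vertices
  obtain ⟨zp, rfl⟩ := hlat p hpE
  obtain ⟨zq, rfl⟩ := hlat q hqE
  obtain ⟨zr, rfl⟩ := hlat r hrE
  obtain ⟨zs, rfl⟩ := hlat s hsE
  simp only [ofInt_apply] at hpc hqc hr1 hs1
  have hq1 : zq 1 = zp 1 := by
    have : (zq 1 : ℝ) = (zp 1 : ℝ) := hqc.trans hpc.symm
    exact_mod_cast this
  have hs1' : zs 1 = zr 1 := by
    have : (zs 1 : ℝ) = (zr 1 : ℝ) := hs1.trans hr1.symm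
    exact_mod_cast this
  have h_h : zr 1 + 1 ≤ zp 1 := by
    have : (zr 1 : ℝ) < (zp 1 : ℝ) := by rw [hr1, hpc]; exact hba
    exact_mod_cast this
  -- the top edge length bound
  have hTex : ∃ e : ℤ, (e:ℝ) = cr ∧ zp 0 ≤ e ∧ zq 0 ≤ e ∧
      (e - zp 0) + (e - zq 0) + 1 ≤ ((latticePts P).ncard : ℤ) := by
    obtain ⟨vt, hvtpq, hvtcr⟩ := hrt
    have hp0 : (zp 0 : ℝ) ≤ cr := hcrle' _ hpP
    have hq0 : (zq 0 : ℝ) ≤ cr := hcrle' _ hqP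
    rcases hvtpq with rfl | rfl <;> simp only [ofInt_apply] at hvtcr
    · refine ⟨zp 0, hvtcr, le_refl _, ?_, ?_⟩
      · have : (zq 0 : ℝ) ≤ (zp 0 : ℝ) := by rw [hvtcr]; exact hq0
        exact_mod_cast this
      · have hle : zq 0 ≤ zp 0 := by
          have : (zq 0 : ℝ) ≤ (zp 0 : ℝ) := by rw [hvtcr]; exact hq0
          exact_mod_cast this
        have := count_bound hfin hconv zq zp hqP hpP (hq1.trans rfl) hle
        omega
    · refine ⟨zq 0, hvtcr, ?_, le_refl _, ?_⟩
      · have : (zp 0 : ℝ) ≤ (zq 0 : ℝ) := by rw [hvtcr]; exact hp0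
        exact_mod_cast this
      · have hle : zp 0 ≤ zq 0 := by
          have : (zp 0 : ℝ) ≤ (zq 0 : ℝ) := by rw [hvtcr]; exact hp0
          exact_mod_cast this
        have := count_bound hfin hconv zp zq hpP hqP hq1.symm hle
        omega
  -- the bottom edge length bound
  have hLex : ∃ f : ℤ, (f:ℝ) = cr ∧ zr 0 ≤ f ∧ zs 0 ≤ f ∧
      (f - zr 0) + (f - zs 0) + 1 ≤ ((latticePts P).ncard : ℤ) := by
    obtain ⟨vb, hvbrs, hvbcr⟩ := hrb
    have hr0 : (zr 0 : ℝ) ≤ cr := hcrle' _ hrP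
    have hs0 : (zs 0 : ℝ) ≤ cr := hcrle' _ hsP
    rcases hvbrs with rfl | rfl <;> simp only [ofInt_apply] at hvbcr
    · refine ⟨zr 0, hvbcr, le_refl _, ?_, ?_⟩
      · have : (zs 0 : ℝ) ≤ (zr 0 : ℝ) := by rw [hvbcr]; exact hs0
        exact_mod_cast this
      · have hle : zs 0 ≤ zr 0 := by
          have : (zs 0 : ℝ) ≤ (zr 0 : ℝ) := by rw [hvbcr]; exact hs0
          exact_mod_cast this
        have := count_bound hfin hconv zs zr hsP hrP hs1' hle
        omega
    · refine ⟨zs 0, hvbcr, ?_, le_refl _, ?_⟩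
      · have : (zr 0 : ℝ) ≤ (zs 0 : ℝ) := by rw [hvbcr]; exact hr0
        exact_mod_cast this
      · have hle : zr 0 ≤ zs 0 := by
          have : (zr 0 : ℝ) ≤ (zs 0 : ℝ) := by rw [hvbcr]; exact hr0
          exact_mod_cast this
        have := count_bound hfin hconv zr zs hrP hsP hs1'.symm hle
        omega
  -- the slant equation in integers
  have hEq : ∃ g1 g2 : ℤ, (g1 = zp 0 ∨ g1 = zq 0) ∧ (g2 = zr 0 ∨ g2 = zs 0) ∧
      g2 - g1 = a * (zp 1 - zr 1) := by
    obtain ⟨vt, vb, h1, h2, he⟩ := hslant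
    rw [← hpc, ← hr1] at he
    rcases h1 with rfl | rfl <;> rcases h2 with rfl | rfl <;> simp only [ofInt_apply] at he
    · exact ⟨zp 0, zr 0, Or.inl rfl, Or.inl rfl, by exact_mod_cast he⟩
    · exact ⟨zp 0, zs 0, Or.inl rfl, Or.inr rfl, by exact_mod_cast he⟩
    · exact ⟨zq 0, zr 0, Or.inr rfl, Or.inl rfl, by exact_mod_cast he⟩
    · exact ⟨zq 0, zs 0, Or.inr rfl, Or.inr rfl, by exact_mod_cast he⟩
  -- put it all together
  obtain ⟨e, hecr, hep, heq', hTcount⟩ := hTex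
  obtain ⟨f, hfcr, hfr, hfs, hLcount⟩ := hLex
  obtain ⟨g1, g2, hg1, hg2, hgeq⟩ := hEq
  have hef : e = f := by
    have : (e : ℝ) = (f : ℝ) := hecr.trans hfcr.symm
    exact_mod_cast this
  have hNc : ((latticePts P).ncard : ℤ) ≤ (N : ℤ) := by exact_mod_cast hcard
  refine final_arith N a (zp 1 - zr 1) ((e - zp 0) + (e - zq 0)) ((f - zr 0) + (f - zs 0))
    (by omega) (by omega) (by omega) ?_ ?_
  · rcases hg1 with rfl | rfl <;> rcases hg2 with rfl | rfl <;> omega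
  · rcases hg1 with rfl | rfl <;> rcases hg2 with rfl | rfl <;> omega
end
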